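/- arXiv:2407.20958 — 3 statements merged into one kernel-verified Lean document; each statement's English description precedes it below -/
import Mathlib

section
/- Let $A$ be a complete Huber pair component over a nonarchimedean field of mixed characteristic $(0,p)$, i.e. a complete topological ring with an open integrally closed subring $A^+ \subseteq A^\circ$ and a ring of definition with the $p$-adic topology. Then $p \cdot A^\circ \subseteq A^+$. -/
/-- An element `x` of a topological ring is topologically nilpotent if `x^n → 0`. -/
def IsTopNilpotent {A : Type*} [Ring A] [TopologicalSpace A] (x : A) : Prop :=
  Filter.Tendsto (fun n : ℕ => x ^ n) Filter.atTop (nhds 0)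

/-- An element `x` of a topological ring is power-bounded if the set of its powers is
bounded: for every neighborhood `U` of `0` there is a neighborhood `V` of `0` with
`V · {xⁿ} ⊆ U`. -/
def IsPowerBoundedElem {A : Type*} [Ring A] [TopologicalSpace A] (x : A) : Prop :=
  ∀ U ∈ nhds (0 : A), ∃ V ∈ nhds (0 : A), ∀ v ∈ V, ∀ n : ℕ, v * x ^ n ∈ U

/-- A subring `S` of `A` is integrally closed in `A` if every element of `A` which is a
root of a monic polynomial with coefficients in `S` lies in `S`. -/
def IsIntegrallyClosedSubring {A : Type*} [CommRing A] (S : Subring A) : Prop :=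
  ∀ x : A, (∃ f : Polynomial A, f.Monic ∧ (∀ i, f.coeff i ∈ S) ∧ Polynomial.eval x f = 0) →
    x ∈ S

/-- Let `(A, A⁺)` be a complete Huber pair over a nonarchimedean field of mixed
characteristic `(0,p)`: `A` is a complete topological ring with a ring of definition `A₀`
carrying the `p`-adic topology (the sets `pⁿA₀` are a basis of neighborhoods of `0`), and
`A⁺ ⊆ A⁰` is an open, integrally closed subring contained in the power-bounded elements.
Then `p · A⁰ ⊆ A⁺`. -/
theorem stmt_0 {A : Type*} [CommRing A] [UniformSpace A] [IsUniformAddGroup A]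
    [IsTopologicalRing A] [CompleteSpace A] (p : ℕ) (hp : p.Prime)
    (Aplus A0 : Subring A)
    (hAplusOpen : IsOpen (Aplus : Set A))
    (hIC : IsIntegrallyClosedSubring Aplus)
    (hSub : ∀ x : A, x ∈ Aplus → IsPowerBoundedElem x)
    (hA0open : IsOpen (A0 : Set A))
    (hA0basis : ∀ U ∈ nhds (0 : A), ∃ n : ℕ,
      {x : A | ∃ a ∈ A0, x = (p : A) ^ n * a} ⊆ U) :
    ∀ x : A, IsPowerBoundedElem x → (p : A) * x ∈ Aplus := by
  intro x hx
  set y := (p : A) * x with hy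
  have hnil : ∀ U ∈ nhds (0 : A), ∀ᶠ n : ℕ in Filter.atTop, y ^ n ∈ U := by
    intro U hU
    obtain ⟨V, hV, hVx⟩ := hx U hU
    obtain ⟨n₀, hn₀⟩ := hA0basis V hV
    filter_upwards [Filter.eventually_ge_atTop n₀] with n hn
    have hpV : (p : A) ^ n ∈ V := by
      apply hn₀
      refine ⟨(p : A) ^ (n - n₀), pow_mem (natCast_mem A0 p) _, ?_⟩
      rw [← pow_add, Nat.add_sub_cancel' hn]
    have : y ^ n = (p : A) ^ n * x ^ n := mul_pow _ _ _
    rw [this]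
    exact hVx _ hpV n
  have hApl : (Aplus : Set A) ∈ nhds (0 : A) :=
    hAplusOpen.mem_nhds (Subring.zero_mem Aplus)
  obtain ⟨N, hNy, hN1⟩ := ((hnil _ hApl).and (Filter.eventually_ge_atTop 1)).exists
  apply hIC
  refine ⟨Polynomial.X ^ N - Polynomial.C (y ^ N), ?_, ?_, ?_⟩
  · exact Polynomial.monic_X_pow_sub_C _ (by omega)
  · intro i
    rw [Polynomial.coeff_sub, Polynomial.coeff_X_pow, Polynomial.coeff_C]
    have h0 : (0 : A) ∈ Aplus := Subring.zero_mem _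
    have h1 : (1 : A) ∈ Aplus := Subring.one_mem _
    split_ifs <;> exact Subring.sub_mem _ (by assumption) (by first | exact hNy | assumption)
  · simp
end

section
/- The group of continuous homomorphisms from $\mathbb{Z}_p^\ast$ to the group of principal units $\mathbb{Z}_p^{\ast\ast} = 1 + p\mathbb{Z}_p$ is isomorphic to $\mathbb{Z}_p$ if $p$ is odd, and to $\mathbb{Z}_2 \oplus (\mathbb{Z}/2)^{\oplus 2}$ if $p = 2$. -/
/-- A continuous homomorphism from `ℤ_pˣ` to the group of principal units
`ℤ_p^{∗∗} = 1 + pℤ_p`: a continuous monoid homomorphism `ℤ_pˣ →* ℤ_pˣ` all of whose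
values `u` satisfy `‖u - 1‖ < 1`, i.e. land in `1 + pℤ_p`.  These form a group under
pointwise multiplication. -/
def PrincipalUnitHom (p : ℕ) [Fact p.Prime] : Type :=
  {f : ℤ_[p]ˣ →* ℤ_[p]ˣ // Continuous f ∧ ∀ u : ℤ_[p]ˣ, ‖((f u : ℤ_[p])) - 1‖ < 1}


open Filter Topology

set_option linter.unusedSectionVars false
namespace PUH

variable {p : ℕ} [hp : Fact p.Prime]

noncomputable def eps (p : ℕ) (k : ℕ) : ℝ := (p : ℝ) ^ (-(k : ℤ))

lemma one_lt_p : (1 : ℝ) < p := by exact_mod_cast hp.out.one_lt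

lemma p_pos : (0 : ℝ) < p := lt_trans one_pos one_lt_p

lemma eps_pos (k : ℕ) : 0 < eps p k := zpow_pos p_pos _

lemma eps_le_one (k : ℕ) : eps p k ≤ 1 := by
  apply zpow_le_one_of_nonpos₀ (le_of_lt one_lt_p)
  simp

lemma eps_lt_eps {j k : ℕ} (h : j < k) : eps p k < eps p j :=
  zpow_lt_zpow_right₀ one_lt_p (by exact_mod_cast neg_lt_neg (show (j:ℤ) < k by exact_mod_cast h))

lemma eps_le_eps {j k : ℕ} (h : j ≤ k) : eps p k ≤ eps p j := by
  rcases eq_or_lt_of_le h with rfl | h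
  · exact le_refl _
  · exact le_of_lt (eps_lt_eps h)

lemma eps_lt_one {k : ℕ} (h : 1 ≤ k) : eps p k < 1 := by
  have := eps_lt_eps (p := p) (j := 0) (k := k) h
  simpa [eps] using this

lemma eps_mul (j k : ℕ) : eps p j * eps p k = eps p (j + k) := by
  rw [eps, eps, eps, ← zpow_add₀ (ne_of_gt p_pos)]
  push_cast; ring_nf

lemma eps_pow (j m : ℕ) : eps p j ^ m = eps p (j * m) := by
  rw [eps, eps, ← zpow_natCast _ m, ← zpow_mul]
  push_cast; ring_nf

lemma norm_p_pow' (k : ℕ) : ‖((p : ℤ_[p]) ^ k)‖ = eps p k := PadicInt.norm_p_pow k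

lemma eps_tendsto : Tendsto (fun k => eps p k) atTop (nhds 0) := by
  have : (fun k : ℕ => eps p k) = fun k : ℕ => ((p : ℝ)⁻¹) ^ k := by
    funext k; rw [eps, zpow_neg, zpow_natCast, inv_pow]
  rw [this]
  apply tendsto_pow_atTop_nhds_zero_of_lt_one (by positivity)
  rw [inv_lt_one_iff₀]; right; exact one_lt_p

lemma eq_zero_of_norm_le_eps {z : ℤ_[p]} (h : ∀ k : ℕ, ‖z‖ ≤ eps p k) : z = 0 := by
  have h0 : ‖z‖ ≤ 0 := le_of_tendsto_of_tendsto' tendsto_const_nhds eps_tendsto h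
  simpa using le_antisymm h0 (norm_nonneg z)

/-- dominant term ultrametric -/
lemma norm_add_eq_left {x y : ℤ_[p]} (h : ‖y‖ < ‖x‖) : ‖x + y‖ = ‖x‖ := by
  rw [PadicInt.norm_add_eq_max_of_ne (ne_of_lt h).symm]
  exact max_eq_left (le_of_lt h)

lemma norm_finset_sum_le {ι : Type*} (s : Finset ι) (f : ι → ℤ_[p]) {C : ℝ} (hC : 0 ≤ C)
    (h : ∀ i ∈ s, ‖f i‖ ≤ C) : ‖∑ i ∈ s, f i‖ ≤ C := by
  classical
  induction s using Finset.induction_on with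
  | empty => simpa using hC
  | @insert a s' hx ih =>
    rw [Finset.sum_insert hx]
    refine le_trans (PadicInt.nonarchimedean _ _) (max_le (h a (by simp)) (ih ?_))
    intro i hi; exact h i (Finset.mem_insert_of_mem hi)

/-- binomial, weak form -/
lemma one_add_pow (u : ℤ_[p]) (m : ℕ) :
    ∃ c : ℤ_[p], (1 + u) ^ m = 1 + m * u + u ^ 2 * c := by
  induction m with
  | zero => exact ⟨0, by simp⟩
  | succ n ih =>
    obtain ⟨c, hc⟩ := ih
    refine ⟨c + n + u * c, ?_⟩
    rw [pow_succ, hc]; push_cast; ring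

/-- binomial, prime power form -/
lemma one_add_pow_prime (u : ℤ_[p]) :
    ∃ c : ℤ_[p], ‖c‖ ≤ ‖u‖ ^ 2 ∧ (1 + u) ^ p = 1 + p * u + u ^ p + p * c := by
  classical
  have hp2 : 2 ≤ p := hp.out.two_le
  refine ⟨∑ k ∈ Finset.Ico 2 p, ((p.choose k / p : ℕ) : ℤ_[p]) * u ^ k, ?_, ?_⟩
  · apply norm_finset_sum_le _ _ (by positivity)
    intro i hi
    rw [Finset.mem_Ico] at hi
    calc ‖((p.choose i / p : ℕ) : ℤ_[p]) * u ^ i‖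
        ≤ ‖u ^ i‖ := by
          rw [norm_mul]
          exact mul_le_of_le_one_left (norm_nonneg _) (PadicInt.norm_le_one _)
      _ ≤ ‖u‖ ^ 2 := by
          rw [norm_pow]
          exact pow_le_pow_of_le_one (norm_nonneg u) (PadicInt.norm_le_one u) hi.1
  · rw [add_comm (1 : ℤ_[p]) u, add_pow]
    rw [Finset.sum_range_succ]
    rw [Finset.range_eq_Ico, Finset.sum_eq_sum_Ico_succ_bot (by omega : 0 < p),
      Finset.sum_eq_sum_Ico_succ_bot (by omega : 1 < p)]
    have hmul : ∀ k ∈ Finset.Ico 2 p,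
        u ^ k * (1:ℤ_[p]) ^ (p - k) * (p.choose k) = (p:ℤ_[p]) * (((p.choose k / p : ℕ) : ℤ_[p]) * u ^ k) := by
      intro k hk
      rw [Finset.mem_Ico] at hk
      have hdvd : p ∣ p.choose k := hp.out.dvd_choose_self (by omega) hk.2
      have : ((p.choose k : ℕ) : ℤ_[p]) = (p : ℤ_[p]) * ((p.choose k / p : ℕ) : ℤ_[p]) := by
        rw [← Nat.cast_mul, Nat.mul_div_cancel' hdvd]
      rw [this]; ring
    rw [Finset.sum_congr rfl hmul, ← Finset.mul_sum]
    simp [Nat.choose_self, Nat.choose_zero_right]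
    ring



variable (e₀ : ℕ)

/-- the generator 1 + p^e₀ -/
noncomputable def gg : ℤ_[p] := 1 + (p : ℤ_[p]) ^ e₀

variable {e₀}

lemma gg_sub_one : gg (p := p) e₀ - 1 = (p : ℤ_[p]) ^ e₀ := by simp [gg]

lemma norm_gg_sub_one : ‖gg (p := p) e₀ - 1‖ = eps p e₀ := by
  rw [gg_sub_one, norm_p_pow']

lemma norm_gg (he₀ : 1 ≤ e₀) : ‖gg (p := p) e₀‖ = 1 := by
  have : gg (p := p) e₀ = 1 + (p : ℤ_[p]) ^ e₀ := rfl
  rw [this, norm_add_eq_left, norm_one]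
  rw [norm_one, norm_p_pow']
  exact eps_lt_one he₀

/-- Step lemma: p-th power increases the level by one. -/
lemma step_lemma (he₀ : 1 ≤ e₀) (he₂ : 2 ≤ (p - 1) * e₀) {a : ℤ_[p]} {k : ℕ}
    (ha : ‖a‖ = eps p (k + e₀)) : ‖(1 + a) ^ p - 1‖ = eps p (k + 1 + e₀) := by
  obtain ⟨c, hc, h⟩ := one_add_pow_prime a
  have key : (1 + a) ^ p - 1 = p * a + (a ^ p + p * c) := by rw [h]; ring
  have hnp : ‖(p:ℤ_[p])‖ = eps p 1 := by rw [← pow_one (p:ℤ_[p]), norm_p_pow']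
  rw [key, norm_add_eq_left, norm_mul, ha, hnp, eps_mul]
  · congr 1; omega
  · have hpa : ‖(p:ℤ_[p]) * a‖ = eps p (1 + (k + e₀)) := by
      rw [norm_mul, ← pow_one (p : ℤ_[p]), norm_p_pow', ha, eps_mul]
    have h1 : ‖a ^ p‖ < eps p (1 + (k + e₀)) := by
      rw [norm_pow, ha, eps_pow]
      apply eps_lt_eps
      have hkk : 2 ≤ (p - 1) * (k + e₀) := by
        calc 2 ≤ (p-1) * e₀ := he₂
        _ ≤ (p-1)*(k+e₀) := Nat.mul_le_mul_left _ (by omega)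
      have hp1 : 1 ≤ p := hp.out.one_le
      nlinarith [Nat.sub_add_cancel hp1]
    have h2 : ‖(p:ℤ_[p]) * c‖ < eps p (1 + (k + e₀)) := by
      calc ‖(p:ℤ_[p]) * c‖ ≤ eps p 1 * (eps p (k+e₀))^2 := by
            rw [norm_mul, ← pow_one (p:ℤ_[p]), norm_p_pow']
            apply mul_le_mul_of_nonneg_left _ (le_of_lt (eps_pos 1))
            rw [← ha]; exact hc
        _ = eps p (1 + ((k+e₀)*2)) := by rw [eps_pow, eps_mul]
        _ < eps p (1 + (k + e₀)) := eps_lt_eps (by omega)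
    calc ‖a ^ p + (p:ℤ_[p]) * c‖ ≤ max ‖a ^ p‖ ‖(p:ℤ_[p]) * c‖ := PadicInt.nonarchimedean _ _
      _ < eps p (1 + (k + e₀)) := max_lt h1 h2
      _ = ‖(p:ℤ_[p]) * a‖ := hpa.symm

lemma gg_pow_p_pow (he₀ : 1 ≤ e₀) (he₂ : 2 ≤ (p - 1) * e₀) (k : ℕ) :
    ‖gg (p := p) e₀ ^ (p ^ k) - 1‖ = eps p (k + e₀) := by
  induction k with
  | zero => simpa using norm_gg_sub_one
  | succ n ih =>
    have : gg (p := p) e₀ ^ (p ^ (n+1)) = (1 + (gg (p := p) e₀ ^ (p ^ n) - 1)) ^ p := by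
      rw [add_sub_cancel, ← pow_mul, pow_succ]
    rw [this, step_lemma he₀ he₂ ih]

/-- power with exponent coprime to p preserves the norm of x - 1 -/
lemma norm_natCast_eq_one {m : ℕ} (hm : ¬ p ∣ m) : ‖(m : ℤ_[p])‖ = 1 := by
  have h1 : ¬ ‖((m : ℤ) : ℤ_[p])‖ < 1 := by
    rw [PadicInt.norm_int_lt_one_iff_dvd]; exact_mod_cast hm
  rw [Int.cast_natCast] at h1
  exact le_antisymm (PadicInt.norm_le_one _) (le_of_not_gt h1)

lemma coprime_pow_norm {x : ℤ_[p]} (hx : ‖x - 1‖ < 1) {m : ℕ} (hm : ¬ p ∣ m) :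
    ‖x ^ m - 1‖ = ‖x - 1‖ := by
  obtain ⟨c, hc⟩ := one_add_pow (x - 1) m
  have hm1 : ‖((m : ℕ) : ℤ_[p])‖ = 1 := norm_natCast_eq_one hm
  rcases eq_or_ne (x - 1) 0 with h0 | h0
  · have : x = 1 := by linear_combination h0
    simp [this]
  · have key : x ^ m - 1 = m * (x - 1) + (x-1)^2 * c := by
      have : (1 + (x-1))^m = x ^ m := by ring_nf
      rw [← this, hc]; ring
    have hpos : 0 < ‖x - 1‖ := norm_pos_iff.mpr h0
    have hlt : ‖(x-1)^2 * c‖ < ‖(m : ℤ_[p]) * (x - 1)‖ := by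
      rw [show ‖(m:ℤ_[p]) * (x-1)‖ = ‖x-1‖ by rw [norm_mul, hm1, one_mul],
        norm_mul, norm_pow]
      calc ‖x-1‖^2 * ‖c‖ ≤ ‖x-1‖^2 * 1 := by
            apply mul_le_mul_of_nonneg_left (PadicInt.norm_le_one c) (by positivity)
        _ = ‖x-1‖ * ‖x-1‖ := by ring
        _ < 1 * ‖x-1‖ := by exact mul_lt_mul_of_pos_right hx hpos
        _ = ‖x-1‖ := by ring
    rw [key, norm_add_eq_left hlt, norm_mul, hm1, one_mul]

/-- powers only shrink the distance to 1 -/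
lemma pow_norm_le {x : ℤ_[p]} (m : ℕ) : ‖x ^ m - 1‖ ≤ ‖x - 1‖ := by
  obtain ⟨c, hc⟩ := one_add_pow (x - 1) m
  have key : x ^ m - 1 = m * (x - 1) + (x-1)^2 * c := by
    have : (1 + (x-1))^m = x ^ m := by ring_nf
    rw [← this, hc]; ring
  rw [key]
  refine le_trans (PadicInt.nonarchimedean _ _) (max_le ?_ ?_)
  · rw [norm_mul]
    exact mul_le_of_le_one_left (norm_nonneg _) (PadicInt.norm_le_one _)
  · rw [norm_mul, pow_two, norm_mul]
    calc ‖x-1‖ * ‖x-1‖ * ‖c‖ ≤ ‖x-1‖ * 1 * 1 := by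
          gcongr <;> [exact PadicInt.norm_le_one _; exact PadicInt.norm_le_one _]
      _ = ‖x-1‖ := by ring
  
/-- exact norm for arbitrary nonzero exponent -/
lemma gg_pow_norm (he₀ : 1 ≤ e₀) (he₂ : 2 ≤ (p - 1) * e₀) {n : ℕ} (hn : n ≠ 0) :
    ‖gg (p := p) e₀ ^ n - 1‖ = ‖(n : ℤ_[p])‖ * eps p e₀ := by
  set k := n.factorization p with hk
  have hfact : p ^ k * (n / p ^ k) = n := Nat.ordProj_mul_ordCompl_eq_self n p
  have hm : ¬ p ∣ (n / p ^ k) := Nat.not_dvd_ordCompl hp.out hn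
  have hx : ‖gg (p := p) e₀ ^ (p ^ k) - 1‖ = eps p (k + e₀) := gg_pow_p_pow he₀ he₂ k
  have hlt : ‖gg (p := p) e₀ ^ (p ^ k) - 1‖ < 1 := by rw [hx]; exact eps_lt_one (by omega)
  have h1 : ‖gg (p := p) e₀ ^ n - 1‖ = eps p (k + e₀) := by
    rw [← hfact, pow_mul, coprime_pow_norm hlt hm, hx]
  have hmn : ‖((n / p ^ k : ℕ) : ℤ_[p])‖ = 1 := norm_natCast_eq_one hm
  have h2 : ‖(n : ℤ_[p])‖ = eps p k := by
    rw [← hfact]; push_cast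
    rw [norm_mul, norm_p_pow', hmn, mul_one]
  rw [h1, h2, eps_mul]

/-- divisibility bound -/
lemma gg_pow_dvd (he₀ : 1 ≤ e₀) (he₂ : 2 ≤ (p - 1) * e₀) (k : ℕ) {n : ℕ} (h : p ^ k ∣ n) :
    ‖gg (p := p) e₀ ^ n - 1‖ ≤ eps p (k + e₀) := by
  obtain ⟨t, rfl⟩ := h
  rw [pow_mul, ← gg_pow_p_pow he₀ he₂ k]
  exact pow_norm_le t

lemma gg_pow_sub_pow_aux (he₀ : 1 ≤ e₀) (he₂ : 2 ≤ (p - 1) * e₀) {k a b : ℕ} (hba : b ≤ a)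
    (h : (p ^ k : ℤ) ∣ (a : ℤ) - b) :
    ‖gg (p := p) e₀ ^ a - gg (p := p) e₀ ^ b‖ ≤ eps p (k + e₀) := by
  have hd : p ^ k ∣ (a - b : ℕ) := by
    have : ((a - b : ℕ) : ℤ) = (a : ℤ) - b := by omega
    exact_mod_cast this ▸ h
  have key : gg (p := p) e₀ ^ a - gg (p := p) e₀ ^ b
      = gg (p := p) e₀ ^ b * (gg (p := p) e₀ ^ (a - b) - 1) := by
    rw [mul_sub, mul_one, ← pow_add]
    congr 2; omega
  rw [key, norm_mul]
  calc ‖gg (p := p) e₀ ^ b‖ * ‖gg (p := p) e₀ ^ (a-b) - 1‖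
      ≤ 1 * eps p (k + e₀) := by
        apply mul_le_mul (PadicInt.norm_le_one _) (gg_pow_dvd he₀ he₂ k hd)
          (norm_nonneg _) zero_le_one
    _ = eps p (k + e₀) := one_mul _

lemma gg_pow_sub_pow (he₀ : 1 ≤ e₀) (he₂ : 2 ≤ (p - 1) * e₀) {k a b : ℕ}
    (h : (p ^ k : ℤ) ∣ (a : ℤ) - b) :
    ‖gg (p := p) e₀ ^ a - gg (p := p) e₀ ^ b‖ ≤ eps p (k + e₀) := by
  rcases le_total b a with hba | hab
  · exact gg_pow_sub_pow_aux he₀ he₂ hba h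
  · rw [norm_sub_rev]
    refine gg_pow_sub_pow_aux he₀ he₂ hab ?_
    rw [show (b:ℤ) - a = -((a:ℤ) - b) by ring]
    exact dvd_neg.mpr h

lemma eps_shift_tendsto : Tendsto (fun N => eps p (N + e₀)) atTop (nhds 0) :=
  eps_tendsto.comp (tendsto_add_atTop_nat e₀)

variable (e₀) in
/-- `psi e₀ x` is `(1 + p^e₀)^x`, defined as a limit of natural powers. -/
noncomputable def psi (x : ℤ_[p]) : ℤ_[p] :=
  limUnder atTop (fun k => gg (p := p) e₀ ^ (x.appr k))

lemma psi_seq_cauchy (he₀ : 1 ≤ e₀) (he₂ : 2 ≤ (p - 1) * e₀) (x : ℤ_[p]) :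
    CauchySeq (fun k => gg (p := p) e₀ ^ (x.appr k)) := by
  apply cauchySeq_of_le_tendsto_0 (fun N => eps p (N + e₀)) _ eps_shift_tendsto
  intro n m N hn hm
  rw [dist_eq_norm]
  apply gg_pow_sub_pow he₀ he₂
  have d1 := PadicInt.dvd_appr_sub_appr x N n hn
  have d2 := PadicInt.dvd_appr_sub_appr x N m hm
  have m1 := PadicInt.appr_mono x hn
  have m2 := PadicInt.appr_mono x hm
  have e1 : ((x.appr n - x.appr N : ℕ) : ℤ) = (x.appr n : ℤ) - x.appr N := by omega
  have e2 : ((x.appr m - x.appr N : ℕ) : ℤ) = (x.appr m : ℤ) - x.appr N := by omega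
  have d1' : (p^N : ℤ) ∣ (x.appr n : ℤ) - x.appr N := by rw [← e1]; exact_mod_cast d1
  have d2' : (p^N : ℤ) ∣ (x.appr m : ℤ) - x.appr N := by rw [← e2]; exact_mod_cast d2
  have : (x.appr n : ℤ) - x.appr m = ((x.appr n:ℤ) - x.appr N) - ((x.appr m:ℤ) - x.appr N) := by
    ring
  rw [this]; exact dvd_sub d1' d2'

lemma psi_tendsto (he₀ : 1 ≤ e₀) (he₂ : 2 ≤ (p - 1) * e₀) (x : ℤ_[p]) :
    Tendsto (fun k => gg (p := p) e₀ ^ (x.appr k)) atTop (nhds (psi e₀ x)) := by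
  obtain ⟨L, hL⟩ := cauchySeq_tendsto_of_complete (psi_seq_cauchy he₀ he₂ x)
  rwa [psi, hL.limUnder_eq]

lemma psi_close (he₀ : 1 ≤ e₀) (he₂ : 2 ≤ (p - 1) * e₀) (x : ℤ_[p]) {n k : ℕ}
    (h : (p : ℤ_[p]) ^ k ∣ (x - n)) :
    ‖psi e₀ x - gg (p := p) e₀ ^ n‖ ≤ eps p (k + e₀) := by
  have key : ∀ j, k ≤ j → ‖gg (p := p) e₀ ^ (x.appr j) - gg (p := p) e₀ ^ n‖ ≤ eps p (k + e₀) := by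
    intro j hj
    apply gg_pow_sub_pow he₀ he₂
    have h1 : (p : ℤ_[p]) ^ j ∣ (x - x.appr j) :=
      Ideal.mem_span_singleton.mp (PadicInt.appr_spec j x)
    have h1' : (p : ℤ_[p]) ^ k ∣ (x - x.appr j) :=
      dvd_trans (pow_dvd_pow _ hj) h1
    have h2 : (p : ℤ_[p]) ^ k ∣ ((x.appr j : ℤ_[p]) - n) := by
      have : ((x.appr j : ℤ_[p]) - n) = (x - n) - (x - x.appr j) := by ring
      rw [this]; exact dvd_sub h h1'
    have h3 : (p : ℤ_[p]) ^ k ∣ (((x.appr j : ℤ) - n : ℤ) : ℤ_[p]) := by push_cast; exact_mod_cast h2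
    exact (PadicInt.pow_p_dvd_int_iff k _).mp h3
  have hten : Tendsto (fun j => ‖gg (p := p) e₀ ^ (x.appr j) - gg (p := p) e₀ ^ n‖) atTop
      (nhds ‖psi e₀ x - gg (p := p) e₀ ^ n‖) :=
    ((psi_tendsto he₀ he₂ x).sub tendsto_const_nhds).norm
  exact le_of_tendsto hten (Filter.eventually_atTop.mpr ⟨k, key⟩)

lemma psi_natCast (he₀ : 1 ≤ e₀) (he₂ : 2 ≤ (p - 1) * e₀) (n : ℕ) :
    psi e₀ ((n : ℕ) : ℤ_[p]) = gg (p := p) e₀ ^ n := by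
  rw [← sub_eq_zero]
  apply eq_zero_of_norm_le_eps
  intro k
  calc ‖psi e₀ ((n:ℕ):ℤ_[p]) - gg (p := p) e₀ ^ n‖ ≤ eps p (k + e₀) :=
        psi_close he₀ he₂ _ (by simp)
    _ ≤ eps p k := eps_le_eps (by omega)

lemma psi_zero (he₀ : 1 ≤ e₀) (he₂ : 2 ≤ (p - 1) * e₀) : psi e₀ (0 : ℤ_[p]) = 1 := by
  have := psi_natCast (p := p) he₀ he₂ 0
  simpa using this

lemma psi_one (he₀ : 1 ≤ e₀) (he₂ : 2 ≤ (p - 1) * e₀) : psi e₀ (1 : ℤ_[p]) = gg (p := p) e₀ := by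
  have := psi_natCast (p := p) he₀ he₂ 1
  simpa using this

lemma psi_add (he₀ : 1 ≤ e₀) (he₂ : 2 ≤ (p - 1) * e₀) (x y : ℤ_[p]) :
    psi e₀ (x + y) = psi e₀ x * psi e₀ y := by
  rw [← sub_eq_zero]
  apply eq_zero_of_norm_le_eps
  intro k
  set a := x.appr k
  set b := y.appr k
  have h1 : ‖psi e₀ x - gg (p := p) e₀ ^ a‖ ≤ eps p (k + e₀) :=
    psi_close he₀ he₂ _ (Ideal.mem_span_singleton.mp (PadicInt.appr_spec k x))
  have h2 : ‖psi e₀ y - gg (p := p) e₀ ^ b‖ ≤ eps p (k + e₀) :=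
    psi_close he₀ he₂ _ (Ideal.mem_span_singleton.mp (PadicInt.appr_spec k y))
  have h3 : ‖psi e₀ (x + y) - gg (p := p) e₀ ^ (a + b)‖ ≤ eps p (k + e₀) := by
    apply psi_close he₀ he₂
    have d1 : (p : ℤ_[p]) ^ k ∣ (x - a) := Ideal.mem_span_singleton.mp (PadicInt.appr_spec k x)
    have d2 : (p : ℤ_[p]) ^ k ∣ (y - b) := Ideal.mem_span_singleton.mp (PadicInt.appr_spec k y)
    have : x + y - ((a + b : ℕ) : ℤ_[p]) = (x - a) + (y - b) := by push_cast; ring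
    rw [this]; exact dvd_add d1 d2
  have key : psi e₀ (x + y) - psi e₀ x * psi e₀ y
      = (psi e₀ (x+y) - gg (p := p) e₀ ^ (a+b))
        + (gg (p := p) e₀ ^ a * (gg (p := p) e₀ ^ b - psi e₀ y)
        + psi e₀ y * (gg (p := p) e₀ ^ a - psi e₀ x)) := by
    rw [pow_add]; ring
  have hb1 : ‖gg (p := p) e₀ ^ a * (gg (p := p) e₀ ^ b - psi e₀ y)‖ ≤ eps p (k + e₀) := by
    rw [norm_mul, norm_sub_rev]
    calc ‖gg (p := p) e₀ ^ a‖ * ‖psi e₀ y - gg (p := p) e₀ ^ b‖ ≤ 1 * eps p (k+e₀) :=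
        mul_le_mul (PadicInt.norm_le_one _) h2 (norm_nonneg _) zero_le_one
      _ = eps p (k+e₀) := one_mul _
  have hb2 : ‖psi e₀ y * (gg (p := p) e₀ ^ a - psi e₀ x)‖ ≤ eps p (k + e₀) := by
    rw [norm_mul, norm_sub_rev]
    calc ‖psi e₀ y‖ * ‖psi e₀ x - gg (p := p) e₀ ^ a‖ ≤ 1 * eps p (k+e₀) :=
        mul_le_mul (PadicInt.norm_le_one _) h1 (norm_nonneg _) zero_le_one
      _ = eps p (k+e₀) := one_mul _
  calc ‖psi e₀ (x + y) - psi e₀ x * psi e₀ y‖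
      ≤ max ‖psi e₀ (x+y) - gg (p := p) e₀ ^ (a+b)‖
          ‖gg (p := p) e₀ ^ a * (gg (p := p) e₀ ^ b - psi e₀ y)
            + psi e₀ y * (gg (p := p) e₀ ^ a - psi e₀ x)‖ := by
        rw [key]; exact PadicInt.nonarchimedean _ _
    _ ≤ max (eps p (k+e₀)) (eps p (k+e₀)) := by
        apply max_le_max h3
        exact le_trans (PadicInt.nonarchimedean _ _) (max_le hb1 hb2)
    _ = eps p (k + e₀) := max_self _
    _ ≤ eps p k := eps_le_eps (by omega)

lemma psi_norm (he₀ : 1 ≤ e₀) (he₂ : 2 ≤ (p - 1) * e₀) (x : ℤ_[p]) :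
    ‖psi e₀ x - 1‖ = ‖x‖ * eps p e₀ := by
  rcases eq_or_ne x 0 with rfl | hx
  · simp [psi_zero he₀ he₂]
  · have hxv : ‖x‖ = eps p x.valuation := by
      rw [PadicInt.norm_eq_zpow_neg_valuation hx, eps]
    set v := x.valuation
    set k := v + 1 with hkdef
    set n := x.appr k with hn
    have hspec : (p : ℤ_[p]) ^ k ∣ (x - n) := Ideal.mem_span_singleton.mp (PadicInt.appr_spec k x)
    have hxn : ‖x - n‖ ≤ eps p k := by
      obtain ⟨t, ht⟩ := hspec
      rw [ht, norm_mul, norm_p_pow']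
      exact mul_le_of_le_one_right (le_of_lt (eps_pos _)) (PadicInt.norm_le_one _)
    have hlt : ‖x - n‖ < ‖x‖ := lt_of_le_of_lt hxn (by rw [hxv]; exact eps_lt_eps (by omega))
    have hnx : ‖(n : ℤ_[p])‖ = ‖x‖ := by
      have : (n : ℤ_[p]) = x + -(x - n) := by ring
      rw [this, norm_add_eq_left]
      rwa [norm_neg]
    have hn0 : n ≠ 0 := by
      intro h0
      rw [h0] at hnx
      simp at hnx
      exact hx (by rwa [eq_comm, norm_eq_zero] at hnx)
    have hK : ‖gg (p := p) e₀ ^ n - 1‖ = ‖x‖ * eps p e₀ := by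
      rw [gg_pow_norm he₀ he₂ hn0, hnx]
    have hclose : ‖psi e₀ x - gg (p := p) e₀ ^ n‖ < ‖x‖ * eps p e₀ := by
      calc ‖psi e₀ x - gg (p := p) e₀ ^ n‖ ≤ eps p (k + e₀) := psi_close he₀ he₂ x hspec
        _ = eps p k * eps p e₀ := (eps_mul _ _).symm
        _ < ‖x‖ * eps p e₀ := by
            apply mul_lt_mul_of_pos_right _ (eps_pos _)
            rw [hxv]; exact eps_lt_eps (by omega)
    have key : psi e₀ x - 1 = (gg (p := p) e₀ ^ n - 1) + (psi e₀ x - gg (p := p) e₀ ^ n) := by ring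
    rw [key, norm_add_eq_left (by rw [hK]; exact hclose), hK]

lemma psi_norm_le (he₀ : 1 ≤ e₀) (he₂ : 2 ≤ (p - 1) * e₀) (x : ℤ_[p]) :
    ‖psi e₀ x - 1‖ ≤ eps p e₀ := by
  rw [psi_norm he₀ he₂]
  exact mul_le_of_le_one_left (le_of_lt (eps_pos _)) (PadicInt.norm_le_one _)

lemma psi_norm_one (he₀ : 1 ≤ e₀) (he₂ : 2 ≤ (p - 1) * e₀) (x : ℤ_[p]) : ‖psi e₀ x‖ = 1 := by
  have : psi e₀ x = 1 + (psi e₀ x - 1) := by ring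
  rw [this, norm_add_eq_left, norm_one]
  rw [norm_one]
  exact lt_of_le_of_lt (psi_norm_le he₀ he₂ x) (eps_lt_one he₀)

lemma psi_sub (he₀ : 1 ≤ e₀) (he₂ : 2 ≤ (p - 1) * e₀) (x y : ℤ_[p]) :
    psi e₀ x - psi e₀ y = psi e₀ y * (psi e₀ (x - y) - 1) := by
  rw [mul_sub, mul_one, ← psi_add he₀ he₂]
  ring_nf

lemma psi_dist (he₀ : 1 ≤ e₀) (he₂ : 2 ≤ (p - 1) * e₀) (x y : ℤ_[p]) :
    ‖psi e₀ x - psi e₀ y‖ = ‖x - y‖ * eps p e₀ := by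
  rw [psi_sub he₀ he₂, norm_mul, psi_norm_one he₀ he₂, one_mul,
    psi_norm he₀ he₂]

lemma psi_cont (he₀ : 1 ≤ e₀) (he₂ : 2 ≤ (p - 1) * e₀) : Continuous (psi (p := p) e₀) := by
  apply LipschitzWith.continuous (K := 1)
  apply LipschitzWith.of_dist_le_mul
  intro x y
  rw [dist_eq_norm, dist_eq_norm, psi_dist he₀ he₂, NNReal.coe_one, one_mul]
  exact mul_le_of_le_one_right (norm_nonneg _) (eps_le_one _)

lemma psi_inj (he₀ : 1 ≤ e₀) (he₂ : 2 ≤ (p - 1) * e₀) {x y : ℤ_[p]}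
    (h : psi e₀ x = psi e₀ y) : x = y := by
  have := psi_dist he₀ he₂ x y
  rw [h, sub_self, norm_zero] at this
  have := (mul_eq_zero.mp this.symm).resolve_right (ne_of_gt (eps_pos _))
  rwa [norm_eq_zero, sub_eq_zero] at this

lemma dvd_of_norm_le {a d : ℤ_[p]} (ha : a ≠ 0) (h : ‖d‖ ≤ ‖a‖) : a ∣ d := by
  rcases eq_or_ne d 0 with rfl | hd
  · exact dvd_zero a
  · have hval : a.valuation ≤ d.valuation := by
      rw [PadicInt.norm_eq_zpow_neg_valuation ha, PadicInt.norm_eq_zpow_neg_valuation hd] at h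
      have := (zpow_le_zpow_iff_right₀ (one_lt_p (p := p))).mp h
      omega
    have hna : a.valuation ≤ d.valuation := by
      omega
    have sa := PadicInt.unitCoeff_spec ha
    have sd := PadicInt.unitCoeff_spec hd
    refine ⟨(↑(PadicInt.unitCoeff ha)⁻¹ : ℤ_[p]) * (PadicInt.unitCoeff hd : ℤ_[p])
      * (p : ℤ_[p]) ^ (d.valuation - a.valuation), ?_⟩
    symm
    nth_rewrite 1 [sa]
    have hpow : (p : ℤ_[p]) ^ (a.valuation) * (p:ℤ_[p]) ^ (d.valuation - a.valuation)
        = (p:ℤ_[p]) ^ (d.valuation) := by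
      rw [← pow_add]; congr 1; omega
    have hu : (PadicInt.unitCoeff ha : ℤ_[p]) * (↑(PadicInt.unitCoeff ha)⁻¹ : ℤ_[p]) = 1 := by
      simp
    calc (PadicInt.unitCoeff ha : ℤ_[p]) * (p:ℤ_[p]) ^ (a.valuation)
          * ((↑(PadicInt.unitCoeff ha)⁻¹ : ℤ_[p]) * (PadicInt.unitCoeff hd : ℤ_[p])
            * (p : ℤ_[p]) ^ (d.valuation - a.valuation))
        = ((PadicInt.unitCoeff ha : ℤ_[p]) * (↑(PadicInt.unitCoeff ha)⁻¹ : ℤ_[p]))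
          * (PadicInt.unitCoeff hd : ℤ_[p])
          * ((p : ℤ_[p]) ^ (a.valuation)
            * (p : ℤ_[p]) ^ (d.valuation - a.valuation)) := by ring
      _ = (PadicInt.unitCoeff hd : ℤ_[p]) * (p:ℤ_[p]) ^ (d.valuation) := by
          rw [hu, hpow, one_mul]
      _ = d := sd.symm

lemma norm_gg_pow_eq_one (he₀ : 1 ≤ e₀) (n : ℕ) : ‖gg (p := p) e₀ ^ n‖ = 1 := by
  rw [norm_pow, norm_gg he₀, one_pow]

/-- key approximation step for surjectivity -/
lemma surj_approx (he₀ : 1 ≤ e₀) (he₂ : 2 ≤ (p - 1) * e₀) {y : ℤ_[p]}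
    (hy : ‖y - 1‖ ≤ eps p e₀) (k : ℕ) : ∃ n : ℕ, ‖y - gg (p := p) e₀ ^ n‖ ≤ eps p (k + e₀) := by
  haveI : NeZero p := ⟨hp.out.ne_zero⟩
  induction k with
  | zero => exact ⟨0, by simpa using hy⟩
  | succ k ih =>
    obtain ⟨n, hn⟩ := ih
    set g := gg (p := p) e₀
    set A := g ^ (p ^ k) - 1 with hA
    have hAnorm : ‖A‖ = eps p (k + e₀) := gg_pow_p_pow he₀ he₂ k
    have hA0 : A ≠ 0 := by
      intro h0; rw [h0, norm_zero] at hAnorm; exact absurd hAnorm.symm (ne_of_gt (eps_pos _))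
    have hdvd : (g ^ n * A) ∣ (y - g ^ n) := by
      apply dvd_of_norm_le
      · intro h0
        have := congrArg norm h0
        rw [norm_zero, norm_mul, norm_gg_pow_eq_one he₀, one_mul, hAnorm] at this
        exact absurd this (ne_of_gt (eps_pos _))
      · rw [norm_mul, norm_gg_pow_eq_one he₀, one_mul, hAnorm]
        exact hn
    obtain ⟨q, hq⟩ := hdvd
    have hqle : ‖q‖ ≤ 1 := PadicInt.norm_le_one q
    set j := (PadicInt.toZMod q).val with hj
    have hqj : ‖q - (j : ℤ_[p])‖ ≤ eps p 1 := by
      have hspec := PadicInt.toZMod_spec q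
      rw [PadicInt.maximalIdeal_eq_span_p, Ideal.mem_span_singleton] at hspec
      have hcast : ((PadicInt.toZMod q).val : ℤ_[p]) = (ZMod.cast (PadicInt.toZMod q) : ℤ_[p]) :=
        ZMod.natCast_val _
      obtain ⟨t, ht⟩ := hspec
      rw [hj, hcast, ht, norm_mul]
      calc ‖(p:ℤ_[p])‖ * ‖t‖ ≤ ‖(p:ℤ_[p])‖ * 1 :=
          mul_le_mul_of_nonneg_left (PadicInt.norm_le_one t) (norm_nonneg _)
        _ = eps p 1 := by rw [mul_one, ← pow_one (p : ℤ_[p]), norm_p_pow']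
    obtain ⟨c, hc⟩ := one_add_pow A j
    refine ⟨n + j * p ^ k, ?_⟩
    have hgj : g ^ (j * p ^ k) = 1 + j * A + A ^ 2 * c := by
      rw [mul_comm j (p ^ k), pow_mul]
      rw [show g ^ p ^ k = 1 + A by rw [hA]; ring]
      exact hc
    have key : y - g ^ (n + j * p ^ k) = g ^ n * A * (q - j) - g ^ n * (A ^ 2 * c) := by
      rw [pow_add, hgj]
      have : y = g ^ n + g ^ n * A * q := by rw [← hq]; ring
      rw [this]; ring
    rw [key]
    have hb1 : ‖g ^ n * A * (q - j)‖ ≤ eps p (k + 1 + e₀) := by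
      rw [norm_mul, norm_mul, norm_gg_pow_eq_one he₀, one_mul, hAnorm]
      calc eps p (k+e₀) * ‖q - j‖ ≤ eps p (k+e₀) * eps p 1 :=
          mul_le_mul_of_nonneg_left hqj (le_of_lt (eps_pos _))
        _ = eps p (k + 1 + e₀) := by rw [eps_mul]; congr 1; omega
    have hb2 : ‖g ^ n * (A ^ 2 * c)‖ ≤ eps p (k + 1 + e₀) := by
      rw [norm_mul, norm_gg_pow_eq_one he₀, one_mul, norm_mul,
        norm_pow, hAnorm]
      calc eps p (k+e₀)^2 * ‖c‖ ≤ eps p (k+e₀)^2 * 1 :=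
          mul_le_mul_of_nonneg_left (PadicInt.norm_le_one c) (by positivity)
        _ = eps p ((k+e₀)*2) := by rw [mul_one, eps_pow]
        _ ≤ eps p (k + 1 + e₀) := eps_le_eps (by omega)
    calc ‖g ^ n * A * (q - j) - g ^ n * (A ^ 2 * c)‖
        ≤ max ‖g ^ n * A * (q - j)‖ ‖-(g ^ n * (A ^ 2 * c))‖ := by
          rw [sub_eq_add_neg]; exact PadicInt.nonarchimedean _ _
      _ ≤ eps p (k + 1 + e₀) := by rw [norm_neg]; exact max_le hb1 hb2

lemma psi_surj (he₀ : 1 ≤ e₀) (he₂ : 2 ≤ (p - 1) * e₀) {y : ℤ_[p]}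
    (hy : ‖y - 1‖ ≤ eps p e₀) : ∃ x, psi e₀ x = y := by
  have hclosed : IsClosed (Set.range (psi (p := p) e₀)) :=
    (isCompact_range (psi_cont he₀ he₂)).isClosed
  have : y ∈ closure (Set.range (psi (p := p) e₀)) := by
    rw [Metric.mem_closure_iff]
    intro ε hε
    obtain ⟨k, hk⟩ := (eps_shift_tendsto (p := p) (e₀ := e₀)).eventually
      (gt_mem_nhds hε) |>.exists
    obtain ⟨n, hn⟩ := surj_approx he₀ he₂ hy k
    refine ⟨psi e₀ ((n : ℕ) : ℤ_[p]), Set.mem_range_self _, ?_⟩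
    rw [psi_natCast he₀ he₂, dist_eq_norm]
    exact lt_of_le_of_lt hn hk
  rw [hclosed.closure_eq] at this
  exact this

noncomputable def psiInv (e₀ : ℕ) (y : ℤ_[p]) : ℤ_[p] :=
  Classical.epsilon (fun x => psi e₀ x = y)

lemma psi_psiInv (he₀ : 1 ≤ e₀) (he₂ : 2 ≤ (p - 1) * e₀) {y : ℤ_[p]}
    (hy : ‖y - 1‖ ≤ eps p e₀) : psi e₀ (psiInv e₀ y) = y := by
  exact Classical.epsilon_spec (psi_surj he₀ he₂ hy)

lemma psiInv_psi (he₀ : 1 ≤ e₀) (he₂ : 2 ≤ (p - 1) * e₀) (x : ℤ_[p]) :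
    psiInv e₀ (psi e₀ x) = x := by
  exact psi_inj he₀ he₂ (Classical.epsilon_spec (⟨x, rfl⟩ : ∃ x', psi e₀ x' = psi e₀ x))

lemma ball_mul {y z : ℤ_[p]} (hy : ‖y - 1‖ ≤ eps p e₀) (hz : ‖z - 1‖ ≤ eps p e₀) :
    ‖y * z - 1‖ ≤ eps p e₀ := by
  have key : y * z - 1 = y * (z - 1) + (y - 1) := by ring
  rw [key]
  refine le_trans (PadicInt.nonarchimedean _ _) (max_le ?_ hy)
  rw [norm_mul]
  calc ‖y‖ * ‖z - 1‖ ≤ 1 * eps p e₀ :=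
      mul_le_mul (PadicInt.norm_le_one _) hz (norm_nonneg _) zero_le_one
    _ = eps p e₀ := one_mul _

lemma psiInv_mul (he₀ : 1 ≤ e₀) (he₂ : 2 ≤ (p - 1) * e₀) {y z : ℤ_[p]}
    (hy : ‖y - 1‖ ≤ eps p e₀) (hz : ‖z - 1‖ ≤ eps p e₀) :
    psiInv e₀ (y * z) = psiInv e₀ y + psiInv e₀ z := by
  apply psi_inj he₀ he₂
  rw [psi_psiInv he₀ he₂ (ball_mul hy hz), psi_add he₀ he₂,
    psi_psiInv he₀ he₂ hy, psi_psiInv he₀ he₂ hz]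

lemma psiInv_dist (he₀ : 1 ≤ e₀) (he₂ : 2 ≤ (p - 1) * e₀) {y z : ℤ_[p]}
    (hy : ‖y - 1‖ ≤ eps p e₀) (hz : ‖z - 1‖ ≤ eps p e₀) :
    ‖psiInv e₀ y - psiInv e₀ z‖ * eps p e₀ = ‖y - z‖ := by
  rw [← psi_dist he₀ he₂, psi_psiInv he₀ he₂ hy, psi_psiInv he₀ he₂ hz]

lemma psiInv_comp_cont (he₀ : 1 ≤ e₀) (he₂ : 2 ≤ (p - 1) * e₀) {Y : Type*} [TopologicalSpace Y]
    {F : Y → ℤ_[p]} (hF : Continuous F)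
    (hB : ∀ t, ‖F t - 1‖ ≤ eps p e₀) : Continuous fun t => psiInv e₀ (F t) := by
  rw [continuous_iff_continuousAt]
  intro t
  rw [ContinuousAt, Metric.tendsto_nhds]
  intro ε hε
  have hev : ∀ᶠ t' in nhds t, dist (F t') (F t) < ε * eps p e₀ := by
    have hFA := hF.continuousAt (x := t)
    rw [ContinuousAt, Metric.tendsto_nhds] at hFA
    exact hFA _ (mul_pos hε (eps_pos _))
  filter_upwards [hev] with t' ht'
  rw [dist_eq_norm] at ht' ⊢
  have hgoal := psiInv_dist he₀ he₂ (hB t') (hB t)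
  have h2 : ‖psiInv e₀ (F t') - psiInv e₀ (F t)‖ * eps p e₀ < ε * eps p e₀ := by
    rw [hgoal]; exact ht'
  exact lt_of_mul_lt_mul_right h2 (le_of_lt (eps_pos _))

variable (e₀) in
/-- `psi` as a map into the units -/
noncomputable def psiU (he₀ : 1 ≤ e₀) (he₂ : 2 ≤ (p - 1) * e₀) (x : ℤ_[p]) : ℤ_[p]ˣ where
  val := psi e₀ x
  inv := psi e₀ (-x)
  val_inv := by rw [← psi_add he₀ he₂, add_neg_cancel, psi_zero he₀ he₂]
  inv_val := by rw [← psi_add he₀ he₂, neg_add_cancel, psi_zero he₀ he₂]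

variable (e₀) in
lemma psiU_val (he₀ : 1 ≤ e₀) (he₂ : 2 ≤ (p - 1) * e₀) (x : ℤ_[p]) :
    (psiU e₀ he₀ he₂ x : ℤ_[p]) = psi e₀ x := rfl

variable (e₀) in
lemma psiU_mul (he₀ : 1 ≤ e₀) (he₂ : 2 ≤ (p - 1) * e₀) (x y : ℤ_[p]) :
    psiU e₀ he₀ he₂ (x + y) = psiU e₀ he₀ he₂ x * psiU e₀ he₀ he₂ y := by
  ext
  rw [Units.val_mul]
  exact psi_add he₀ he₂ x y

variable (e₀) in
lemma psiU_cont (he₀ : 1 ≤ e₀) (he₂ : 2 ≤ (p - 1) * e₀) :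
    Continuous (psiU e₀ he₀ he₂) := by
  apply Units.continuous_iff.mpr
  constructor
  · exact psi_cont he₀ he₂
  · exact (psi_cont he₀ he₂).comp continuous_neg

variable (e₀) in
lemma psiU_pow (he₀ : 1 ≤ e₀) (he₂ : 2 ≤ (p - 1) * e₀) (x : ℤ_[p]) (n : ℕ) :
    psiU e₀ he₀ he₂ x ^ n = psiU e₀ he₀ he₂ ((n : ℤ_[p]) * x) := by
  induction n with
  | zero =>
    ext
    rw [pow_zero]
    show (1 : ℤ_[p]) = psi e₀ ((0 : ℤ_[p]) * x)
    rw [zero_mul, psi_zero he₀ he₂]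
  | succ n ih =>
    rw [pow_succ, ih, ← psiU_mul]
    congr 1
    push_cast
    ring

lemma norm_le_eps1_of_lt_one {z : ℤ_[p]} (h : ‖z‖ < 1) : ‖z‖ ≤ eps p 1 := by
  have := (PadicInt.norm_lt_pow_iff_norm_le_pow_sub_one z 0).mp (by simpa using h)
  have heq : eps p 1 = (p:ℝ)^((0:ℤ)-1) := by rw [eps]; norm_num
  rwa [← heq] at this

lemma fermat_little (u : ℤ_[p]ˣ) : ‖(u : ℤ_[p]) ^ (p - 1) - 1‖ ≤ eps p 1 := by
  apply norm_le_eps1_of_lt_one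
  have h0 : PadicInt.toZMod ((u : ℤ_[p]) ^ (p-1) - 1) = 0 := by
    rw [map_sub, map_pow, map_one]
    have hu : IsUnit (PadicInt.toZMod (u : ℤ_[p])) := (u.isUnit).map PadicInt.toZMod
    haveI : Fact (Nat.Prime p) := hp
    rw [ZMod.pow_card_sub_one_eq_one hu.ne_zero, sub_self]
  have hmem : (u : ℤ_[p]) ^ (p-1) - 1 ∈ IsLocalRing.maximalIdeal ℤ_[p] := by
    rw [← PadicInt.ker_toZMod]
    exact RingHom.mem_ker.mpr h0
  rw [IsLocalRing.mem_maximalIdeal] at hmem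
  exact PadicInt.mem_nonunits.mp hmem

lemma odd_case (h3 : 3 ≤ p) :
    ∃ e : PrincipalUnitHom p ≃ ℤ_[p],
      ∀ a b : ℤ_[p], (e.symm (a + b)).1 = (e.symm a).1 * (e.symm b).1 := by
  have he₀ : (1:ℕ) ≤ 1 := le_rfl
  have he₂ : 2 ≤ (p - 1) * 1 := by omega
  -- inverse of p - 1 in ℤ_[p]
  have hpm1 : ‖((p - 1 : ℕ) : ℤ_[p])‖ = 1 := by
    apply norm_natCast_eq_one
    intro hdvd
    have := Nat.le_of_dvd (by omega) hdvd
    omega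
  have hU : IsUnit ((p - 1 : ℕ) : ℤ_[p]) := PadicInt.isUnit_iff.mpr hpm1
  set rr : ℤ_[p] := ((hU.unit⁻¹ : ℤ_[p]ˣ) : ℤ_[p]) with hrr
  have hrmul : rr * ((p - 1 : ℕ) : ℤ_[p]) = 1 := hU.val_inv_mul
  -- the "coordinate" map
  set cc : ℤ_[p]ˣ → ℤ_[p] := fun u => psiInv 1 ((u : ℤ_[p]) ^ (p - 1)) with hcc
  have hcc_psi : ∀ u : ℤ_[p]ˣ, psi 1 (cc u) = (u : ℤ_[p]) ^ (p - 1) :=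
    fun u => psi_psiInv he₀ he₂ (fermat_little u)
  have hcc_mul : ∀ u v : ℤ_[p]ˣ, cc (u * v) = cc u + cc v := by
    intro u v
    show psiInv 1 (((u * v : ℤ_[p]ˣ) : ℤ_[p]) ^ (p - 1))
      = psiInv 1 ((u : ℤ_[p]) ^ (p - 1)) + psiInv 1 ((v : ℤ_[p]) ^ (p - 1))
    rw [Units.val_mul, mul_pow]
    exact psiInv_mul he₀ he₂ (fermat_little u) (fermat_little v)
  have hcc_cont : Continuous cc :=
    psiInv_comp_cont he₀ he₂ (Units.continuous_val.pow (p - 1)) fermat_little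
  -- psi as powers
  have psi_pow : ∀ (x : ℤ_[p]) (n : ℕ), psi 1 x ^ n = psi 1 ((n : ℤ_[p]) * x) := by
    intro x n
    have := congrArg (Units.val) (psiU_pow 1 he₀ he₂ x n)
    rwa [Units.val_pow_eq_pow_val] at this
  -- ball membership of values of f
  have hfball : ∀ (f : PrincipalUnitHom p) (u : ℤ_[p]ˣ), ‖((f.1 u : ℤ_[p])) - 1‖ ≤ eps p 1 :=
    fun f u => norm_le_eps1_of_lt_one (f.2.2 u)
  -- forward map
  set E : PrincipalUnitHom p → ℤ_[p] :=
    fun f => psiInv 1 ((f.1 (psiU 1 he₀ he₂ 1) : ℤ_[p])) with hE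
  -- backward map
  have hmapmul : ∀ a : ℤ_[p], ∀ u v : ℤ_[p]ˣ,
      psiU 1 he₀ he₂ (a * rr * cc (u * v))
        = psiU 1 he₀ he₂ (a * rr * cc u) * psiU 1 he₀ he₂ (a * rr * cc v) := by
    intro a u v
    rw [hcc_mul u v, ← psiU_mul 1 he₀ he₂]
    congr 1
    ring
  have hFcont : ∀ a : ℤ_[p], Continuous (fun u : ℤ_[p]ˣ => psiU 1 he₀ he₂ (a * rr * cc u)) := by
    intro a
    exact (psiU_cont 1 he₀ he₂).comp (continuous_const.mul hcc_cont)
  have hFnorm : ∀ a : ℤ_[p], ∀ u : ℤ_[p]ˣ,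
      ‖((psiU 1 he₀ he₂ (a * rr * cc u) : ℤ_[p])) - 1‖ < 1 := by
    intro a u
    rw [psiU_val]
    exact lt_of_le_of_lt (psi_norm_le he₀ he₂ _) (eps_lt_one he₀)
  set F : ℤ_[p] → PrincipalUnitHom p := fun a =>
    ⟨MonoidHom.mk' (fun u => psiU 1 he₀ he₂ (a * rr * cc u)) (hmapmul a),
      hFcont a, hFnorm a⟩ with hF
  -- computation of cc at the generator
  have hccG : cc (psiU 1 he₀ he₂ 1) = ((p - 1 : ℕ) : ℤ_[p]) := by
    have hkey : ((psiU 1 he₀ he₂ 1 : ℤ_[p])) ^ (p - 1) = psi 1 (((p-1:ℕ) : ℤ_[p]) * 1) := by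
      rw [psiU_val, psi_pow]
    show psiInv 1 ((psiU 1 he₀ he₂ 1 : ℤ_[p]) ^ (p - 1)) = ((p - 1 : ℕ) : ℤ_[p])
    rw [hkey, mul_one, psiInv_psi he₀ he₂]
  have hright : ∀ a : ℤ_[p], E (F a) = a := by
    intro a
    rw [hE, hF]
    show psiInv 1 ((psiU 1 he₀ he₂ (a * rr * cc (psiU 1 he₀ he₂ 1)) : ℤ_[p])) = a
    rw [psiU_val, psiInv_psi he₀ he₂, hccG, mul_assoc, hrmul, mul_one]
  have hleft : ∀ f : PrincipalUnitHom p, F (E f) = f := by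
    intro f
    -- the additive map phi
    set φ : ℤ_[p] → ℤ_[p] := fun x => psiInv 1 ((f.1 (psiU 1 he₀ he₂ x) : ℤ_[p])) with hφ
    have hφadd : ∀ x y, φ (x + y) = φ x + φ y := by
      intro x y
      show psiInv 1 ((f.1 (psiU 1 he₀ he₂ (x + y)) : ℤ_[p]))
        = psiInv 1 ((f.1 (psiU 1 he₀ he₂ x) : ℤ_[p])) + psiInv 1 ((f.1 (psiU 1 he₀ he₂ y) : ℤ_[p]))
      rw [psiU_mul 1 he₀ he₂, map_mul, Units.val_mul]
      exact psiInv_mul he₀ he₂ (hfball f _) (hfball f _)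
    have hφcont : Continuous φ :=
      psiInv_comp_cont he₀ he₂
        (Units.continuous_val.comp (f.2.1.comp (psiU_cont 1 he₀ he₂))) (fun x => hfball f _)
    have hφzero : φ 0 = 0 := by
      have h00 := hφadd 0 0
      rw [add_zero] at h00
      linear_combination -h00
    have hφnat : ∀ n : ℕ, φ ((n : ℕ) : ℤ_[p]) = ((n : ℕ) : ℤ_[p]) * φ 1 := by
      intro n
      induction n with
      | zero => simpa using hφzero
      | succ m ih =>
        push_cast
        rw [hφadd, ih]
        push_cast
        ring
    have hφlin : φ = fun x => x * φ 1 := by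
      apply PadicInt.denseRange_natCast.equalizer hφcont (continuous_id.mul continuous_const)
      funext n
      exact hφnat n
    have hφ1 : φ 1 = E f := rfl
    -- main pointwise identity
    apply Subtype.ext
    apply MonoidHom.ext
    intro u
    apply Units.ext
    show (psiU 1 he₀ he₂ (E f * rr * cc u) : ℤ_[p]) = (f.1 u : ℤ_[p])
    set y : ℤ_[p] := psiInv 1 ((f.1 u : ℤ_[p])) with hy
    have hyval : psi 1 y = (f.1 u : ℤ_[p]) := psi_psiInv he₀ he₂ (hfball f u)
    -- psiU of cc u is u^(p-1)
    have hA : psiU 1 he₀ he₂ (cc u) = u ^ (p - 1) := by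
      apply Units.ext
      rw [psiU_val, hcc_psi, Units.val_pow_eq_pow_val]
    have hC : φ (cc u) = ((p - 1 : ℕ) : ℤ_[p]) * y := by
      show psiInv 1 ((f.1 (psiU 1 he₀ he₂ (cc u)) : ℤ_[p])) = _
      rw [hA, map_pow, Units.val_pow_eq_pow_val, ← hyval, psi_pow, psiInv_psi he₀ he₂]
    have hlin' : ((p - 1 : ℕ) : ℤ_[p]) * y = cc u * E f := by
      rw [← hC]
      exact congrFun hφlin (cc u)
    have hyeq : y = E f * rr * cc u := by
      have hstep : y = (rr * ((p - 1 : ℕ) : ℤ_[p])) * y := by rw [hrmul, one_mul]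
      rw [hstep, mul_assoc, hlin']
      ring
    rw [psiU_val, ← hyeq, hyval]
  refine ⟨Equiv.mk E F hleft hright, ?_⟩
  intro a b
  show (F (a + b)).1 = (F a).1 * (F b).1
  apply MonoidHom.ext
  intro u
  rw [MonoidHom.mul_apply]
  apply Units.ext
  rw [Units.val_mul]
  show psi 1 ((a + b) * rr * cc u) = psi 1 (a * rr * cc u) * psi 1 (b * rr * cc u)
  rw [← psi_add he₀ he₂]
  congr 1
  ring

/-! ### The case p = 2 -/

section Two

local notation "P₂" => fun u : ℤ_[2]ˣ => ‖(u : ℤ_[2]) - 1‖ ≤ eps 2 2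

lemma he₀2 : (1:ℕ) ≤ 2 := by omega
lemma he₂2 : 2 ≤ (2 - 1) * 2 := by omega

lemma zmod2_cases (d : ZMod 2) : d = 0 ∨ d = 1 := by
  fin_cases d
  · exact Or.inl rfl
  · exact Or.inr rfl

lemma unit2_norm (u : ℤ_[2]ˣ) : ‖(u : ℤ_[2]) - 1‖ < 1 := by
  have h0 : PadicInt.toZMod ((u : ℤ_[2]) - 1) = 0 := by
    rw [map_sub, map_one]
    have hu : IsUnit (PadicInt.toZMod (u : ℤ_[2])) := (u.isUnit).map PadicInt.toZMod
    have : ∀ z : ZMod 2, IsUnit z → z = 1 := by decide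
    rw [this _ hu, sub_self]
  have hmem : (u : ℤ_[2]) - 1 ∈ IsLocalRing.maximalIdeal ℤ_[2] := by
    rw [← PadicInt.ker_toZMod]; exact RingHom.mem_ker.mpr h0
  rw [IsLocalRing.mem_maximalIdeal] at hmem
  exact PadicInt.mem_nonunits.mp hmem

lemma norm_le_eps2_iff_dvd (z : ℤ_[2]) : ‖z‖ ≤ eps 2 2 ↔ (2:ℤ_[2])^2 ∣ z := by
  have h := PadicInt.norm_le_pow_iff_mem_span_pow z 2
  rw [Ideal.mem_span_singleton] at h
  rw [show eps 2 2 = ((2:ℕ):ℝ)^(-(2:ℕ):ℤ) by rw [eps]]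
  exact_mod_cast h

lemma norm_lt_one_iff_dvd2 (z : ℤ_[2]) : ‖z‖ < 1 ↔ (2:ℤ_[2]) ∣ z := PadicInt.norm_lt_one_iff_dvd z

lemma toZMod_eq_zero_iff (z : ℤ_[2]) : PadicInt.toZMod z = 0 ↔ ‖z‖ < 1 := by
  constructor
  · intro h
    have hmem : z ∈ IsLocalRing.maximalIdeal ℤ_[2] := by
      rw [← PadicInt.ker_toZMod]; exact RingHom.mem_ker.mpr h
    rw [IsLocalRing.mem_maximalIdeal] at hmem
    exact PadicInt.mem_nonunits.mp hmem
  · intro h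
    have hmem : z ∈ IsLocalRing.maximalIdeal ℤ_[2] :=
      (IsLocalRing.mem_maximalIdeal z).mpr (PadicInt.mem_nonunits.mpr h)
    rw [← PadicInt.ker_toZMod] at hmem
    exact RingHom.mem_ker.mp hmem

lemma quadrant {u : ℤ_[2]ˣ} (h : ¬ ‖(u : ℤ_[2]) - 1‖ ≤ eps 2 2) :
    ‖(u : ℤ_[2]) + 1‖ ≤ eps 2 2 := by
  obtain ⟨t, ht⟩ := (norm_lt_one_iff_dvd2 _).mp (unit2_norm u)
  have htodd : PadicInt.toZMod t ≠ 0 := by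
    intro h0
    obtain ⟨w, hw⟩ := (norm_lt_one_iff_dvd2 t).mp ((toZMod_eq_zero_iff t).mp h0)
    apply h
    rw [norm_le_eps2_iff_dvd]
    exact ⟨w, by rw [ht, hw]; ring⟩
  have ht1 : PadicInt.toZMod (t + 1) = 0 := by
    rw [map_add, map_one]
    have := zmod2_cases (PadicInt.toZMod t)
    rcases this with h0 | h1
    · exact absurd h0 htodd
    · rw [h1]; decide
  obtain ⟨w, hw⟩ := (norm_lt_one_iff_dvd2 _).mp ((toZMod_eq_zero_iff _).mp ht1)
  rw [norm_le_eps2_iff_dvd]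
  have h2 : (u:ℤ_[2]) = 2 * t + 1 := by linear_combination ht
  exact ⟨w, by rw [h2]; linear_combination 2 * hw⟩

lemma not_both {x : ℤ_[2]} (h1 : ‖x - 1‖ ≤ eps 2 2) (h2 : ‖x + 1‖ ≤ eps 2 2) : False := by
  have key : (2 : ℤ_[2]) = (x + 1) - (x - 1) := by ring
  have h2n : ‖(2:ℤ_[2])‖ = eps 2 1 := by
    rw [show ((2:ℤ_[2])) = ((2:ℕ):ℤ_[2])^1 by norm_num, norm_p_pow' (p := 2) 1]
  have : ‖(2:ℤ_[2])‖ ≤ eps 2 2 := by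
    rw [key, sub_eq_add_neg]
    refine le_trans (PadicInt.nonarchimedean _ _) (max_le h2 ?_)
    rw [norm_neg]; exact h1
  rw [h2n] at this
  exact absurd this (not_le.mpr (eps_lt_eps (by omega)))

noncomputable def s2 (u : ℤ_[2]ˣ) : ZMod 2 :=
  if ‖(u : ℤ_[2]) - 1‖ ≤ eps 2 2 then 0 else 1

noncomputable def sg2 (u : ℤ_[2]ˣ) : ℤ_[2]ˣ :=
  if ‖(u : ℤ_[2]) - 1‖ ≤ eps 2 2 then 1 else -1

noncomputable def m2 (d : ZMod 2) : ℤ_[2]ˣ := if d = 0 then 1 else -1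

lemma sg2_eq_m2_s2 (u : ℤ_[2]ˣ) : sg2 u = m2 (s2 u) := by
  rw [sg2, s2, m2]
  by_cases h : ‖(u : ℤ_[2]) - 1‖ ≤ eps 2 2
  · rw [if_pos h, if_pos h, if_pos rfl]
  · rw [if_neg h, if_neg h, if_neg (by decide)]

lemma m2_mul (x y : ZMod 2) : m2 (x + y) = m2 x * m2 y := by
  rcases zmod2_cases x with rfl | rfl <;> rcases zmod2_cases y with rfl | rfl
  · simp [m2]
  · simp [m2]
  · simp [m2]
  · rw [show (1 + 1 : ZMod 2) = 0 by decide, m2, m2, if_pos rfl, if_neg (by decide),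
      neg_mul_neg, one_mul]

lemma m2_inv (d : ZMod 2) : (m2 d)⁻¹ = m2 d := by
  rcases zmod2_cases d with rfl | rfl
  · rw [m2, if_pos rfl, inv_one]
  · rw [m2, if_neg (by decide)]
    apply inv_eq_of_mul_eq_one_right
    rw [neg_mul_neg, one_mul]

lemma m2_pow (d : ZMod 2) (n : ℕ) : m2 d ^ n = m2 (d * (n : ZMod 2)) := by
  rcases zmod2_cases d with rfl | rfl
  · simp [m2]
  · rw [one_mul]
    rcases Nat.even_or_odd n with he | ho
    · have hn0 : ((n : ℕ) : ZMod 2) = 0 := (ZMod.natCast_eq_zero_iff n 2).mpr he.two_dvd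
      rw [hn0]
      apply Units.ext
      rw [Units.val_pow_eq_pow_val]
      show ((-1 : ℤ_[2]ˣ) : ℤ_[2]) ^ n = ((1 : ℤ_[2]ˣ) : ℤ_[2])
      rw [Units.val_neg, Units.val_one, he.neg_one_pow]
    · have hn1 : ((n : ℕ) : ZMod 2) = 1 := by
        obtain ⟨k, rfl⟩ := ho
        push_cast
        rw [show ((2:ZMod 2)) = 0 by decide]
        ring
      rw [hn1]
      apply Units.ext
      rw [Units.val_pow_eq_pow_val]
      show ((-1 : ℤ_[2]ˣ) : ℤ_[2]) ^ n = ((-1 : ℤ_[2]ˣ) : ℤ_[2])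
      rw [Units.val_neg, Units.val_one, ho.neg_one_pow]

lemma PP {u v : ℤ_[2]ˣ} (hu : ‖(u : ℤ_[2]) - 1‖ ≤ eps 2 2) (hv : ‖(v : ℤ_[2]) - 1‖ ≤ eps 2 2) :
    ‖((u*v : ℤ_[2]ˣ) : ℤ_[2]) - 1‖ ≤ eps 2 2 := by
  rw [Units.val_mul]
  have key : (u : ℤ_[2]) * v - 1 = (u:ℤ_[2]) * ((v:ℤ_[2]) - 1) + ((u:ℤ_[2]) - 1) := by ring
  rw [key]
  refine le_trans (PadicInt.nonarchimedean _ _) (max_le ?_ hu)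
  rw [norm_mul, PadicInt.norm_units, one_mul]
  exact hv

lemma PQ {u v : ℤ_[2]ˣ} (hu : ‖(u : ℤ_[2]) - 1‖ ≤ eps 2 2) (hv : ‖(v : ℤ_[2]) + 1‖ ≤ eps 2 2) :
    ‖((u*v : ℤ_[2]ˣ) : ℤ_[2]) + 1‖ ≤ eps 2 2 := by
  rw [Units.val_mul]
  have key : (u : ℤ_[2]) * v + 1 = (u:ℤ_[2]) * ((v:ℤ_[2]) + 1) - ((u:ℤ_[2]) - 1) := by ring
  rw [key, sub_eq_add_neg]
  refine le_trans (PadicInt.nonarchimedean _ _) (max_le ?_ (by rw [norm_neg]; exact hu))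
  rw [norm_mul, PadicInt.norm_units, one_mul]
  exact hv

lemma QQ {u v : ℤ_[2]ˣ} (hu : ‖(u : ℤ_[2]) + 1‖ ≤ eps 2 2) (hv : ‖(v : ℤ_[2]) + 1‖ ≤ eps 2 2) :
    ‖((u*v : ℤ_[2]ˣ) : ℤ_[2]) - 1‖ ≤ eps 2 2 := by
  rw [Units.val_mul]
  have key : (u : ℤ_[2]) * v - 1 = (u:ℤ_[2]) * ((v:ℤ_[2]) + 1) - ((u:ℤ_[2]) + 1) := by ring
  rw [key, sub_eq_add_neg]
  refine le_trans (PadicInt.nonarchimedean _ _) (max_le ?_ (by rw [norm_neg]; exact hu))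
  rw [norm_mul, PadicInt.norm_units, one_mul]
  exact hv

lemma s2_mul (u v : ℤ_[2]ˣ) : s2 (u * v) = s2 u + s2 v := by
  rw [s2, s2, s2]
  by_cases hu : ‖(u : ℤ_[2]) - 1‖ ≤ eps 2 2 <;> by_cases hv : ‖(v : ℤ_[2]) - 1‖ ≤ eps 2 2
  · rw [if_pos hu, if_pos hv, if_pos (PP hu hv)]; decide
  · rw [if_pos hu, if_neg hv, if_neg ?_]
    · decide
    · intro hP
      exact not_both hP (PQ hu (quadrant hv))
  · rw [if_neg hu, if_pos hv, if_neg ?_]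
    · decide
    · intro hP
      rw [mul_comm] at hP
      exact not_both hP (PQ hv (quadrant hu))
  · rw [if_neg hu, if_neg hv, if_pos (QQ (quadrant hu) (quadrant hv))]; decide

lemma sg2_mul (u v : ℤ_[2]ˣ) : sg2 (u * v) = sg2 u * sg2 v := by
  rw [sg2_eq_m2_s2, sg2_eq_m2_s2, sg2_eq_m2_s2, s2_mul, m2_mul]

lemma sg2_sq (u : ℤ_[2]ˣ) : sg2 u * sg2 u = 1 := by
  rw [sg2]
  by_cases h : ‖(u : ℤ_[2]) - 1‖ ≤ eps 2 2
  · rw [if_pos h, mul_one]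
  · rw [if_neg h, neg_mul_neg, one_mul]

end Two

section Two2

noncomputable def c2 (u : ℤ_[2]ˣ) : ℤ_[2] := psiInv 2 ((sg2 u * u : ℤ_[2]ˣ) : ℤ_[2])

noncomputable def t2 (u : ℤ_[2]ˣ) : ZMod 2 := PadicInt.toZMod (c2 u)

lemma v_ball (u : ℤ_[2]ˣ) : ‖((sg2 u * u : ℤ_[2]ˣ) : ℤ_[2]) - 1‖ ≤ eps 2 2 := by
  rw [sg2]
  by_cases h : ‖(u : ℤ_[2]) - 1‖ ≤ eps 2 2
  · rw [if_pos h, one_mul]; exact h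
  · rw [if_neg h, Units.val_mul, Units.val_neg, Units.val_one]
    rw [show (-1 : ℤ_[2]) * u - 1 = -((u:ℤ_[2]) + 1) by ring, norm_neg]
    exact quadrant h

lemma c2_psi (u : ℤ_[2]ˣ) : psi 2 (c2 u) = ((sg2 u * u : ℤ_[2]ˣ) : ℤ_[2]) :=
  psi_psiInv he₀2 he₂2 (v_ball u)

lemma c2_mul (u v : ℤ_[2]ˣ) : c2 (u * v) = c2 u + c2 v := by
  rw [c2, c2, c2]
  have hre : sg2 (u*v) * (u*v) = (sg2 u * u) * (sg2 v * v) := by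
    rw [sg2_mul]; exact mul_mul_mul_comm _ _ _ _
  rw [hre, Units.val_mul]
  exact psiInv_mul he₀2 he₂2 (v_ball u) (v_ball v)

lemma t2_mul (u v : ℤ_[2]ˣ) : t2 (u * v) = t2 u + t2 v := by
  rw [t2, t2, t2, c2_mul, map_add]

lemma u_decomp (u : ℤ_[2]ˣ) : u = sg2 u * (sg2 u * u) := by
  rw [← mul_assoc, sg2_sq, one_mul]

lemma vU_eq (u : ℤ_[2]ˣ) : sg2 u * u = psiU 2 he₀2 he₂2 (c2 u) := by
  apply Units.ext
  rw [psiU_val, c2_psi]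

lemma sq_eq_one {w : ℤ_[2]ˣ} (h : w * w = 1) : w = 1 ∨ w = -1 := by
  have hval : ((w:ℤ_[2]) - 1) * ((w:ℤ_[2]) + 1) = 0 := by
    have h2 := congrArg Units.val h
    rw [Units.val_mul, Units.val_one] at h2
    linear_combination h2
  rcases mul_eq_zero.mp hval with h1 | h1
  · left; apply Units.ext
    rw [Units.val_one]
    linear_combination h1
  · right; apply Units.ext
    rw [Units.val_neg, Units.val_one]
    linear_combination h1

lemma le_eps2_iff_lt_eps1 (z : ℤ_[2]) : ‖z‖ ≤ eps 2 2 ↔ ‖z‖ < eps 2 1 := by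
  have h := PadicInt.norm_le_pow_iff_norm_lt_pow_add_one z (-2)
  rw [show (-2 + 1 : ℤ) = -1 by ring] at h
  have e2 : eps 2 2 = ((2:ℕ):ℝ)^(-2:ℤ) := by rw [eps]; norm_num
  have e1 : eps 2 1 = ((2:ℕ):ℝ)^(-1:ℤ) := by rw [eps]; norm_num
  rw [e2, e1]; exact h

lemma lt_one_iff_le_eps1 (z : ℤ_[2]) : ‖z‖ < 1 ↔ ‖z‖ ≤ eps 2 1 := by
  have h := PadicInt.norm_lt_pow_iff_norm_le_pow_sub_one z 0
  rw [show ((0:ℤ) - 1 : ℤ) = -1 by ring] at h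
  have e1 : eps 2 1 = ((2:ℕ):ℝ)^(-1:ℤ) := by rw [eps]; norm_num
  have e0 : (1:ℝ) = ((2:ℕ):ℝ)^(0:ℤ) := by norm_num
  rw [e1, e0]; exact h

lemma hPclopen : IsClopen {u : ℤ_[2]ˣ | ‖(u : ℤ_[2]) - 1‖ ≤ eps 2 2} := by
  constructor
  · exact isClosed_le ((continuous_norm.comp (Units.continuous_val.sub continuous_const)))
      continuous_const
  · have : {u : ℤ_[2]ˣ | ‖(u : ℤ_[2]) - 1‖ ≤ eps 2 2}
        = {u : ℤ_[2]ˣ | ‖(u : ℤ_[2]) - 1‖ < eps 2 1} := by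
      ext u; exact le_eps2_iff_lt_eps1 _
    rw [this]
    exact isOpen_lt ((continuous_norm.comp (Units.continuous_val.sub continuous_const)))
      continuous_const

lemma cont_sg2val : Continuous (fun u : ℤ_[2]ˣ => ((sg2 u : ℤ_[2]ˣ) : ℤ_[2])) := by
  have hfun : (fun u : ℤ_[2]ˣ => ((sg2 u : ℤ_[2]ˣ) : ℤ_[2]))
      = fun u : ℤ_[2]ˣ => if ‖(u : ℤ_[2]) - 1‖ ≤ eps 2 2 then (1:ℤ_[2]) else (-1:ℤ_[2]) := by
    funext u
    rw [sg2, apply_ite (fun w : ℤ_[2]ˣ => (w : ℤ_[2])), Units.val_one, Units.val_neg,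
      Units.val_one]
  rw [hfun]
  apply Continuous.if ?_ continuous_const continuous_const
  rw [hPclopen.frontier_eq]
  intro a ha
  exact absurd ha (Set.notMem_empty a)

lemma cont_c2 : Continuous c2 := by
  apply psiInv_comp_cont he₀2 he₂2 (F := fun u : ℤ_[2]ˣ => ((sg2 u * u : ℤ_[2]ˣ) : ℤ_[2]))
    ?_ v_ball
  have hfun : (fun u : ℤ_[2]ˣ => ((sg2 u * u : ℤ_[2]ˣ) : ℤ_[2]))
      = fun u : ℤ_[2]ˣ => ((sg2 u : ℤ_[2]ˣ) : ℤ_[2]) * ((u : ℤ_[2]ˣ) : ℤ_[2]) := by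
    funext u; rw [Units.val_mul]
  rw [hfun]
  exact cont_sg2val.mul Units.continuous_val

lemma hTclopen : IsClopen {u : ℤ_[2]ˣ | PadicInt.toZMod (c2 u) = 0} := by
  have hc2 : Continuous c2 := cont_c2
  have hset : {u : ℤ_[2]ˣ | PadicInt.toZMod (c2 u) = 0} = {u : ℤ_[2]ˣ | ‖c2 u‖ < 1} := by
    ext u; exact toZMod_eq_zero_iff _
  constructor
  · rw [hset, show {u : ℤ_[2]ˣ | ‖c2 u‖ < 1} = {u : ℤ_[2]ˣ | ‖c2 u‖ ≤ eps 2 1} by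
      ext u; exact lt_one_iff_le_eps1 _]
    exact isClosed_le (continuous_norm.comp hc2) continuous_const
  · rw [hset]
    exact isOpen_lt (continuous_norm.comp hc2) continuous_const

end Two2

section Two3

noncomputable def psiU2 : ℤ_[2] → ℤ_[2]ˣ := psiU 2 he₀2 he₂2

noncomputable def G2 : ℤ_[2]ˣ := psiU2 1

lemma psiU2_val (x : ℤ_[2]) : (psiU2 x : ℤ_[2]) = psi 2 x := rfl

lemma psiU2_mul (x y : ℤ_[2]) : psiU2 (x + y) = psiU2 x * psiU2 y := psiU_mul 2 he₀2 he₂2 x y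

lemma psiU2_zero : psiU2 0 = 1 := by
  apply Units.ext
  rw [psiU2_val, psi_zero he₀2 he₂2, Units.val_one]

lemma psiU2_pow (x : ℤ_[2]) (n : ℕ) : psiU2 x ^ n = psiU2 ((n : ℤ_[2]) * x) :=
  psiU_pow 2 he₀2 he₂2 x n

lemma psiU2_cont : Continuous psiU2 := psiU_cont 2 he₀2 he₂2

lemma psiU2_ball (x : ℤ_[2]) : ‖(psiU2 x : ℤ_[2]) - 1‖ ≤ eps 2 2 := psi_norm_le he₀2 he₂2 x

lemma m2_zero : m2 0 = 1 := if_pos rfl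

lemma m2_one : m2 1 = -1 := if_neg (by decide)

lemma sg2_pos {u : ℤ_[2]ˣ} (h : ‖(u : ℤ_[2]) - 1‖ ≤ eps 2 2) : sg2 u = 1 := if_pos h

lemma sg2_neg {u : ℤ_[2]ˣ} (h : ¬ ‖(u : ℤ_[2]) - 1‖ ≤ eps 2 2) : sg2 u = -1 := if_neg h

lemma s2_pos {u : ℤ_[2]ˣ} (h : ‖(u : ℤ_[2]) - 1‖ ≤ eps 2 2) : s2 u = 0 := if_pos h

lemma s2_neg {u : ℤ_[2]ˣ} (h : ¬ ‖(u : ℤ_[2]) - 1‖ ≤ eps 2 2) : s2 u = 1 := if_neg h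

lemma s2_one : s2 1 = 0 := by
  apply s2_pos
  rw [Units.val_one, sub_self, norm_zero]
  exact le_of_lt (eps_pos _)

lemma notP_neg_one : ¬ ‖((-1 : ℤ_[2]ˣ) : ℤ_[2]) - 1‖ ≤ eps 2 2 := by
  rw [Units.val_neg, Units.val_one]
  rw [show (-1 : ℤ_[2]) - 1 = -(2 : ℤ_[2]) by ring, norm_neg]
  rw [show ((2:ℤ_[2])) = ((2:ℕ):ℤ_[2])^1 by norm_num, norm_p_pow' (p := 2) 1]
  exact not_le.mpr (eps_lt_eps (by omega))

lemma s2_neg_one : s2 (-1) = 1 := s2_neg notP_neg_one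

lemma s2_psiU2 (x : ℤ_[2]) : s2 (psiU2 x) = 0 := s2_pos (psiU2_ball x)

lemma notP_neg_psiU2 (x : ℤ_[2]) : ¬ ‖((-psiU2 x : ℤ_[2]ˣ) : ℤ_[2]) - 1‖ ≤ eps 2 2 := by
  intro h
  rw [Units.val_neg, show -(psiU2 x : ℤ_[2]) - 1 = -((psiU2 x : ℤ_[2]) + 1) by ring,
    norm_neg] at h
  exact not_both (psiU2_ball x) h

lemma s2_neg_psiU2 (x : ℤ_[2]) : s2 (-psiU2 x) = 1 := s2_neg (notP_neg_psiU2 x)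

lemma c2_psiU2 (x : ℤ_[2]) : c2 (psiU2 x) = x := by
  rw [c2, sg2_pos (psiU2_ball x), one_mul, psiU2_val, psiInv_psi he₀2 he₂2]

lemma c2_neg_psiU2 (x : ℤ_[2]) : c2 (-psiU2 x) = x := by
  rw [c2, sg2_neg (notP_neg_psiU2 x), neg_mul_neg, one_mul, psiU2_val,
    psiInv_psi he₀2 he₂2]

lemma s2_m2 (d : ZMod 2) : s2 (m2 d) = d := by
  rcases zmod2_cases d with rfl | rfl
  · rw [m2_zero, s2_one]
  · rw [m2_one, s2_neg_one]

lemma s2_m2_mul (d : ZMod 2) (x : ℤ_[2]) : s2 (m2 d * psiU2 x) = d := by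
  rcases zmod2_cases d with rfl | rfl
  · rw [m2_zero, one_mul, s2_psiU2]
  · rw [m2_one, neg_one_mul, s2_neg_psiU2]

lemma c2_m2_mul (d : ZMod 2) (x : ℤ_[2]) : c2 (m2 d * psiU2 x) = x := by
  rcases zmod2_cases d with rfl | rfl
  · rw [m2_zero, one_mul, c2_psiU2]
  · rw [m2_one, neg_one_mul, c2_neg_psiU2]

lemma c2_neg_one : c2 (-1) = 0 := by
  have : (-1 : ℤ_[2]ˣ) = -psiU2 0 := by rw [psiU2_zero]
  rw [this, c2_neg_psiU2]

lemma c2_one : c2 1 = 0 := by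
  have : (1 : ℤ_[2]ˣ) = psiU2 0 := psiU2_zero.symm
  rw [this, c2_psiU2]

lemma t2_neg_one : t2 (-1) = 0 := by rw [t2, c2_neg_one, map_zero]

lemma G2_c2 : c2 G2 = 1 := c2_psiU2 1

lemma G2_s2 : s2 G2 = 0 := s2_psiU2 1

lemma G2_t2 : t2 G2 = 1 := by rw [t2, G2_c2, map_one]

lemma psiU2_natCast (n : ℕ) : psiU2 ((n : ℕ) : ℤ_[2]) = G2 ^ n := by
  rw [G2, psiU2_pow, mul_one]

lemma hTclopen2 : IsClopen {x : ℤ_[2] | PadicInt.toZMod x = 0} := by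
  have hset : {x : ℤ_[2] | PadicInt.toZMod x = 0} = {x : ℤ_[2] | ‖x‖ < 1} := by
    ext x; exact toZMod_eq_zero_iff _
  constructor
  · rw [hset, show {x : ℤ_[2] | ‖x‖ < 1} = {x : ℤ_[2] | ‖x‖ ≤ eps 2 1} by
      ext x; exact lt_one_iff_le_eps1 _]
    exact isClosed_le continuous_norm continuous_const
  · rw [hset]
    exact isOpen_lt continuous_norm continuous_const

lemma cont_m2s : Continuous (fun u : ℤ_[2]ˣ => ((m2 (s2 u) : ℤ_[2]ˣ) : ℤ_[2])) := by
  have : (fun u : ℤ_[2]ˣ => ((m2 (s2 u) : ℤ_[2]ˣ) : ℤ_[2]))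
      = fun u : ℤ_[2]ˣ => ((sg2 u : ℤ_[2]ˣ) : ℤ_[2]) := by
    funext u; rw [← sg2_eq_m2_s2]
  rw [this]
  exact cont_sg2val

lemma cont_m2t : Continuous (fun u : ℤ_[2]ˣ => ((m2 (t2 u) : ℤ_[2]ˣ) : ℤ_[2])) := by
  have hfun : (fun u : ℤ_[2]ˣ => ((m2 (t2 u) : ℤ_[2]ˣ) : ℤ_[2]))
      = fun u : ℤ_[2]ˣ => if PadicInt.toZMod (c2 u) = 0 then (1:ℤ_[2]) else (-1:ℤ_[2]) := by
    funext u
    rw [t2, m2, apply_ite (fun w : ℤ_[2]ˣ => (w : ℤ_[2])), Units.val_one, Units.val_neg,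
      Units.val_one]
  rw [hfun]
  apply Continuous.if ?_ continuous_const continuous_const
  rw [hTclopen.frontier_eq]
  intro a ha
  exact absurd ha (Set.notMem_empty a)

lemma cont_m2t' : Continuous (fun x : ℤ_[2] => ((m2 (PadicInt.toZMod x) : ℤ_[2]ˣ) : ℤ_[2])) := by
  have hfun : (fun x : ℤ_[2] => ((m2 (PadicInt.toZMod x) : ℤ_[2]ˣ) : ℤ_[2]))
      = fun x : ℤ_[2] => if PadicInt.toZMod x = 0 then (1:ℤ_[2]) else (-1:ℤ_[2]) := by
    funext x
    rw [m2, apply_ite (fun w : ℤ_[2]ˣ => (w : ℤ_[2])), Units.val_one, Units.val_neg,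
      Units.val_one]
  rw [hfun]
  apply Continuous.if ?_ continuous_const continuous_const
  rw [hTclopen2.frontier_eq]
  intro a ha
  exact absurd ha (Set.notMem_empty a)

end Two3

noncomputable def Phi2 (z : ℤ_[2] × ZMod 2 × ZMod 2) (u : ℤ_[2]ˣ) : ℤ_[2]ˣ :=
  m2 (z.2.1 * s2 u) * m2 (z.2.2 * t2 u) * psiU2 (z.1 * c2 u)

lemma Phi2_mul (z : ℤ_[2] × ZMod 2 × ZMod 2) (u v : ℤ_[2]ˣ) :
    Phi2 z (u * v) = Phi2 z u * Phi2 z v := by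
  rw [Phi2, Phi2, Phi2, s2_mul, t2_mul, c2_mul, mul_add z.2.1, mul_add z.2.2, mul_add z.1,
    m2_mul, m2_mul, psiU2_mul]
  simp only [mul_assoc, mul_left_comm, mul_comm]

lemma Phi2_val (z : ℤ_[2] × ZMod 2 × ZMod 2) (u : ℤ_[2]ˣ) :
    (Phi2 z u : ℤ_[2]) = ((m2 (z.2.1 * s2 u) : ℤ_[2]ˣ) : ℤ_[2])
      * ((m2 (z.2.2 * t2 u) : ℤ_[2]ˣ) : ℤ_[2]) * psi 2 (z.1 * c2 u) := by
  rw [Phi2, Units.val_mul, Units.val_mul, psiU2_val]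

lemma Phi2_inv_val (z : ℤ_[2] × ZMod 2 × ZMod 2) (u : ℤ_[2]ˣ) :
    (((Phi2 z u)⁻¹ : ℤ_[2]ˣ) : ℤ_[2]) = ((m2 (z.2.1 * s2 u) : ℤ_[2]ˣ) : ℤ_[2])
      * ((m2 (z.2.2 * t2 u) : ℤ_[2]ˣ) : ℤ_[2]) * psi 2 (-(z.1 * c2 u)) := by
  have hinv : (Phi2 z u)⁻¹ = m2 (z.2.1 * s2 u) * m2 (z.2.2 * t2 u)
      * (psiU 2 he₀2 he₂2 (z.1 * c2 u))⁻¹ := by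
    rw [Phi2, mul_inv, mul_inv, m2_inv, m2_inv]
    rfl
  rw [hinv, Units.val_mul, Units.val_mul]
  rfl

lemma cont_msfactor (d : ZMod 2) :
    Continuous (fun u : ℤ_[2]ˣ => ((m2 (d * s2 u) : ℤ_[2]ˣ) : ℤ_[2])) := by
  rcases zmod2_cases d with rfl | rfl
  · have : (fun u : ℤ_[2]ˣ => ((m2 (0 * s2 u) : ℤ_[2]ˣ) : ℤ_[2])) = fun _ => (1 : ℤ_[2]) := by
      funext u; rw [zero_mul, m2_zero, Units.val_one]
    rw [this]; exact continuous_const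
  · have : (fun u : ℤ_[2]ˣ => ((m2 (1 * s2 u) : ℤ_[2]ˣ) : ℤ_[2]))
        = fun u : ℤ_[2]ˣ => ((m2 (s2 u) : ℤ_[2]ˣ) : ℤ_[2]) := by
      funext u; rw [one_mul]
    rw [this]; exact cont_m2s

lemma cont_mtfactor (d : ZMod 2) :
    Continuous (fun u : ℤ_[2]ˣ => ((m2 (d * t2 u) : ℤ_[2]ˣ) : ℤ_[2])) := by
  rcases zmod2_cases d with rfl | rfl
  · have : (fun u : ℤ_[2]ˣ => ((m2 (0 * t2 u) : ℤ_[2]ˣ) : ℤ_[2])) = fun _ => (1 : ℤ_[2]) := by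
      funext u; rw [zero_mul, m2_zero, Units.val_one]
    rw [this]; exact continuous_const
  · have : (fun u : ℤ_[2]ˣ => ((m2 (1 * t2 u) : ℤ_[2]ˣ) : ℤ_[2]))
        = fun u : ℤ_[2]ˣ => ((m2 (t2 u) : ℤ_[2]ˣ) : ℤ_[2]) := by
      funext u; rw [one_mul]
    rw [this]; exact cont_m2t

lemma Phi2_cont (z : ℤ_[2] × ZMod 2 × ZMod 2) : Continuous (Phi2 z) := by
  apply Units.continuous_iff.mpr
  constructor
  · show Continuous fun u : ℤ_[2]ˣ => ((Phi2 z u : ℤ_[2]ˣ) : ℤ_[2])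
    have : (fun u : ℤ_[2]ˣ => ((Phi2 z u : ℤ_[2]ˣ) : ℤ_[2]))
        = fun u : ℤ_[2]ˣ => ((m2 (z.2.1 * s2 u) : ℤ_[2]ˣ) : ℤ_[2])
          * ((m2 (z.2.2 * t2 u) : ℤ_[2]ˣ) : ℤ_[2]) * psi 2 (z.1 * c2 u) := by
      funext u; exact Phi2_val z u
    rw [this]
    exact ((cont_msfactor z.2.1).mul (cont_mtfactor z.2.2)).mul
      ((psi_cont he₀2 he₂2).comp (continuous_const.mul cont_c2))
  · show Continuous fun u : ℤ_[2]ˣ => (((Phi2 z u)⁻¹ : ℤ_[2]ˣ) : ℤ_[2])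
    have : (fun u : ℤ_[2]ˣ => (((Phi2 z u)⁻¹ : ℤ_[2]ˣ) : ℤ_[2]))
        = fun u : ℤ_[2]ˣ => ((m2 (z.2.1 * s2 u) : ℤ_[2]ˣ) : ℤ_[2])
          * ((m2 (z.2.2 * t2 u) : ℤ_[2]ˣ) : ℤ_[2]) * psi 2 (-(z.1 * c2 u)) := by
      funext u; exact Phi2_inv_val z u
    rw [this]
    exact ((cont_msfactor z.2.1).mul (cont_mtfactor z.2.2)).mul
      ((psi_cont he₀2 he₂2).comp ((continuous_const.mul cont_c2).neg))

lemma two_case :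
    ∃ e : PrincipalUnitHom 2 ≃ ℤ_[2] × ZMod 2 × ZMod 2,
      ∀ a b : ℤ_[2] × ZMod 2 × ZMod 2,
        (e.symm (a + b)).1 = (e.symm a).1 * (e.symm b).1 := by
  set F2 : (ℤ_[2] × ZMod 2 × ZMod 2) → PrincipalUnitHom 2 := fun z =>
    ⟨MonoidHom.mk' (Phi2 z) (Phi2_mul z), Phi2_cont z, fun u => unit2_norm _⟩ with hF2
  set E2 : PrincipalUnitHom 2 → ℤ_[2] × ZMod 2 × ZMod 2 := fun f =>
    (c2 (f.1 G2), s2 (f.1 (-1)), s2 (f.1 G2)) with hE2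
  -- computations of Phi2 at -1 and G2
  have hPhi_neg1 : ∀ z : ℤ_[2] × ZMod 2 × ZMod 2, Phi2 z (-1) = m2 z.2.1 := by
    intro z
    rw [Phi2, s2_neg_one, t2_neg_one, c2_neg_one, mul_one, mul_zero, mul_zero, m2_zero,
      psiU2_zero, mul_one, mul_one]
  have hPhiG2 : ∀ z : ℤ_[2] × ZMod 2 × ZMod 2, Phi2 z G2 = m2 z.2.2 * psiU2 z.1 := by
    intro z
    rw [Phi2, G2_s2, G2_t2, G2_c2, mul_one, mul_zero, m2_zero, one_mul, mul_one]
  have hright : ∀ z, E2 (F2 z) = z := by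
    intro z
    obtain ⟨a, eb, db⟩ := z
    show (c2 (Phi2 (a, eb, db) G2), s2 (Phi2 (a, eb, db) (-1)), s2 (Phi2 (a, eb, db) G2))
      = (a, eb, db)
    rw [hPhi_neg1, hPhiG2]
    show (c2 (m2 db * psiU2 a), s2 (m2 eb), s2 (m2 db * psiU2 a)) = (a, eb, db)
    rw [c2_m2_mul, s2_m2, s2_m2_mul]
  have hleft : ∀ f, F2 (E2 f) = f := by
    intro f
    set a : ℤ_[2] := c2 (f.1 G2) with ha
    set eb : ZMod 2 := s2 (f.1 (-1)) with heb
    set db : ZMod 2 := s2 (f.1 G2) with hdb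
    have hf1 : f.1 (-1) = m2 eb := by
      have hsq : f.1 (-1) * f.1 (-1) = 1 := by
        rw [← map_mul, neg_one_mul, neg_neg, map_one]
      rcases sq_eq_one hsq with h1 | h1
      · rw [heb, h1, s2_one, m2_zero]
      · rw [heb, h1, s2_neg_one, m2_one]
    have hfG : f.1 G2 = m2 db * psiU2 a := by
      conv_lhs => rw [u_decomp (f.1 G2)]
      rw [vU_eq, sg2_eq_m2_s2, ← hdb, ← ha]
      rfl
    -- the key density argument
    have key : ∀ x : ℤ_[2],
        f.1 (psiU2 x) = m2 (db * PadicInt.toZMod x) * psiU2 (a * x) := by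
      have hg1 : Continuous (fun x : ℤ_[2] => ((f.1 (psiU2 x) : ℤ_[2]ˣ) : ℤ_[2])) :=
        Units.continuous_val.comp (f.2.1.comp psiU2_cont)
      have hg2 : Continuous (fun x : ℤ_[2] =>
          ((m2 (db * PadicInt.toZMod x) : ℤ_[2]ˣ) : ℤ_[2]) * psi 2 (a * x)) := by
        apply Continuous.mul ?_ ((psi_cont he₀2 he₂2).comp (continuous_const.mul continuous_id))
        rcases zmod2_cases db with hdb0 | hdb1
        · have : (fun x : ℤ_[2] => ((m2 (db * PadicInt.toZMod x) : ℤ_[2]ˣ) : ℤ_[2]))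
              = fun _ => (1:ℤ_[2]) := by
            funext x; rw [hdb0, zero_mul, m2_zero, Units.val_one]
          rw [this]; exact continuous_const
        · have : (fun x : ℤ_[2] => ((m2 (db * PadicInt.toZMod x) : ℤ_[2]ˣ) : ℤ_[2]))
              = fun x : ℤ_[2] => ((m2 (PadicInt.toZMod x) : ℤ_[2]ˣ) : ℤ_[2]) := by
            funext x; rw [hdb1, one_mul]
          rw [this]; exact cont_m2t'
      have hnat : ∀ n : ℕ, f.1 (psiU2 ((n:ℕ) : ℤ_[2]))
          = m2 (db * PadicInt.toZMod ((n:ℕ) : ℤ_[2])) * psiU2 (a * ((n:ℕ) : ℤ_[2])) := by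
        intro n
        rw [psiU2_natCast, map_pow, hfG, mul_pow, m2_pow, psiU2_pow, map_natCast, mul_comm a]
      have heq : (fun x : ℤ_[2] => ((f.1 (psiU2 x) : ℤ_[2]ˣ) : ℤ_[2]))
          = fun x : ℤ_[2] =>
            ((m2 (db * PadicInt.toZMod x) : ℤ_[2]ˣ) : ℤ_[2]) * psi 2 (a * x) := by
        apply PadicInt.denseRange_natCast.equalizer hg1 hg2
        funext n
        simp only [Function.comp_apply]
        rw [hnat n, Units.val_mul, psiU2_val]
      intro x
      apply Units.ext
      have := congrFun heq x
      rw [Units.val_mul, psiU2_val] at *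
      exact this
    apply Subtype.ext
    apply MonoidHom.ext
    intro u
    show Phi2 (E2 f) u = f.1 u
    have hE : E2 f = (a, eb, db) := rfl
    rw [hE]
    show m2 (eb * s2 u) * m2 (db * t2 u) * psiU2 (a * c2 u) = f.1 u
    have hsgn : f.1 (sg2 u) = m2 (eb * s2 u) := by
      by_cases h : ‖(u : ℤ_[2]) - 1‖ ≤ eps 2 2
      · rw [sg2_pos h, s2_pos h, mul_zero, m2_zero, map_one]
      · rw [sg2_neg h, s2_neg h, mul_one, hf1]
    have hvU2 : sg2 u * u = psiU2 (c2 u) := vU_eq u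
    have hrest : f.1 (sg2 u * u) = m2 (db * t2 u) * psiU2 (a * c2 u) := by
      rw [hvU2, key (c2 u)]
      rfl
    conv_rhs => rw [u_decomp u]
    rw [map_mul, hsgn, hrest, mul_assoc]
  refine ⟨Equiv.mk E2 F2 hleft hright, ?_⟩
  intro z w
  show (F2 (z + w)).1 = (F2 z).1 * (F2 w).1
  apply MonoidHom.ext
  intro u
  rw [MonoidHom.mul_apply]
  show Phi2 (z + w) u = Phi2 z u * Phi2 w u
  rw [Phi2, Phi2, Phi2]
  have h1 : (z + w).1 = z.1 + w.1 := rfl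
  have h2 : (z + w).2.1 = z.2.1 + w.2.1 := rfl
  have h3 : (z + w).2.2 = z.2.2 + w.2.2 := rfl
  rw [h1, h2, h3, add_mul, add_mul, add_mul, m2_mul, m2_mul, psiU2_mul]
  simp only [mul_assoc, mul_left_comm, mul_comm]

end PUH

/-- The group of continuous homomorphisms `ℤ_pˣ → 1 + pℤ_p` is isomorphic to `ℤ_p` for `p`
odd, and to `ℤ₂ ⊕ (ℤ/2)²` for `p = 2`; the isomorphism is a group isomorphism for the
pointwise multiplication of homomorphisms. -/
theorem stmt_5 (p : ℕ) [Fact p.Prime] :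
    (Odd p → ∃ e : PrincipalUnitHom p ≃ ℤ_[p],
        ∀ a b : ℤ_[p], (e.symm (a + b)).1 = (e.symm a).1 * (e.symm b).1) ∧
    (p = 2 → ∃ e : PrincipalUnitHom 2 ≃ ℤ_[2] × ZMod 2 × ZMod 2,
        ∀ a b : ℤ_[2] × ZMod 2 × ZMod 2,
          (e.symm (a + b)).1 = (e.symm a).1 * (e.symm b).1) := by
  constructor
  · intro hodd
    have h3 : 3 ≤ p := by
      have h2 := (Fact.out : p.Prime).two_le
      rcases eq_or_lt_of_le h2 with rfl | h
      · exact absurd hodd (by decide)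
      · omega
    exact PUH.odd_case h3
  · intro h2
    subst h2
    exact PUH.two_case
end

section
/- For $n \geq 3$, the abelianization of $\mathrm{SL}_n(\mathbb{Z})$ is trivial, i.e., $\mathrm{SL}_n(\mathbb{Z})$ is perfect. -/
open Matrix
open scoped commutatorElement

namespace SLnPerfectAux

abbrev SL (n : ℕ) := Matrix.SpecialLinearGroup (Fin n) ℤ

/-- Transvection as an element of `SL n`. -/
def T {n : ℕ} (i j : Fin n) (hij : i ≠ j) (c : ℤ) : SL n :=
  ⟨Matrix.transvection i j c, Matrix.det_transvection_of_ne i j hij c⟩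

lemma T_inv {n : ℕ} (i j : Fin n) (h : i ≠ j) (c : ℤ) : (T i j h c)⁻¹ = T i j h (-c) := by
  apply inv_eq_of_mul_eq_one_right
  apply Subtype.ext
  show transvection i j c * transvection i j (-c) = 1
  rw [transvection_mul_transvection_same _ _ h, add_neg_cancel, transvection_zero]

lemma neg_std {n : ℕ} (i j : Fin n) (a : ℤ) :
    single i j (-a) = -single i j a := by
  ext i' j'; simp [single, apply_ite Neg.neg]

lemma trans_comm {n : ℕ} (i j m : Fin n) (hij : i ≠ j) (him : i ≠ m) (hmj : m ≠ j) (a b : ℤ) :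
    transvection i m a * transvection m j b * transvection i m (-a) * transvection m j (-b)
      = transvection i j (a * b) := by
  have h1 : m ≠ i := him.symm
  have h2 : j ≠ i := hij.symm
  have h3 : j ≠ m := hmj.symm
  simp only [transvection, neg_std, mul_add, add_mul, Matrix.one_mul, Matrix.mul_one,
    Matrix.mul_neg, Matrix.neg_mul, single_mul_single_same, single_mul_single_of_ne,
    h1, h2, h3, hij, him, hmj, ne_eq, not_false_eq_true, Matrix.zero_mul, Matrix.mul_zero,
    smul_zero, add_zero, zero_add]
  abel

/-- For `n ≥ 3`, every transvection lies in the commutator subgroup. -/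
lemma T_mem_comm {n : ℕ} (hn : 3 ≤ n) (i j : Fin n) (hij : i ≠ j) (c : ℤ) :
    T i j hij c ∈ commutator (SL n) := by
  obtain ⟨m, hmi, hmj⟩ : ∃ m : Fin n, m ≠ i ∧ m ≠ j := by
    by_contra h
    push_neg at h
    have hsub : (Finset.univ : Finset (Fin n)) ⊆ {i, j} := by
      intro x _
      rcases eq_or_ne x i with hx | hx
      · simp [hx]
      · simp [h x hx]
    have hcard := Finset.card_le_card hsub
    have h2 : ({i, j} : Finset (Fin n)).card ≤ 2 := by
      apply le_trans (Finset.card_insert_le _ _)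
      simp
    simp only [Finset.card_univ, Fintype.card_fin] at hcard
    omega
  have key : T i j hij c = ⁅T i m (Ne.symm hmi) c, T m j hmj 1⁆ := by
    rw [commutatorElement_def, T_inv, T_inv]
    apply Subtype.ext
    show transvection i j c
        = transvection i m c * transvection m j 1 * transvection i m (-c) * transvection m j (-1)
    rw [trans_comm i j m hij (Ne.symm hmi) hmj c 1, mul_one]
  rw [key, commutator_def]
  exact Subgroup.commutator_mem_commutator (Subgroup.mem_top _) (Subgroup.mem_top _)

lemma col_combo {n : ℕ} (A : SL n) (κ : Fin n) :
    ∑ j, A.1.adjugate κ j * A.1 j κ = 1 := by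
  have h := Matrix.adjugate_mul A.1
  have h2 := congrFun (congrFun h κ) κ
  rw [Matrix.mul_apply] at h2
  simpa [A.2, Matrix.one_apply] using h2

/-- Euclid-style column reduction: if the first `k` columns of `A` agree with the identity
and the rows `< k` of column `k` vanish, then `A ∈ H`, by induction on the `ℓ¹`-size of
column `k`, given the induction hypothesis `ih` for `k+1` identity columns. -/
lemma euclid {n : ℕ} (H : Subgroup (SL n))
    (hH : ∀ (i j : Fin n) (hij : i ≠ j) (c : ℤ), T i j hij c ∈ H)
    (k : ℕ) (hk : k < n)
    (ih : ∀ B : SL n, (∀ (j i : Fin n), (j : ℕ) < k + 1 →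
        B.1 i j = if i = j then 1 else 0) → B ∈ H) :
    ∀ N (A : SL n),
      (∀ (j i : Fin n), (j : ℕ) < k → A.1 i j = if i = j then 1 else 0) →
      (∀ i : Fin n, (i : ℕ) < k → A.1 i ⟨k, hk⟩ = 0) →
      (∑ i, (A.1 i ⟨k, hk⟩).natAbs ≤ N) → A ∈ H := by
  set κ : Fin n := ⟨k, hk⟩ with hκ
  have hκval : (κ : ℕ) = k := rfl
  intro N
  induction N with
  | zero =>
    intro A hcols hclr hsum
    exfalso
    have hz : ∀ i ∈ Finset.univ, (A.1 i κ).natAbs = 0 :=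
      Finset.sum_eq_zero_iff.mp (Nat.le_zero.mp hsum)
    have hall : ∀ i : Fin n, A.1 i κ = 0 :=
      fun i => Int.natAbs_eq_zero.mp (hz i (Finset.mem_univ i))
    have := col_combo A κ
    simp [hall] at this
  | succ N ihN =>
    intro A hcols hclr hsum
    -- a general reduction step: subtract a multiple of the pivot row `p` from row `t`
    have hred : ∀ p t : Fin n, p ≠ t → A.1 p κ ≠ 0 →
        (A.1 p κ).natAbs ≤ (A.1 t κ).natAbs → A ∈ H := by
      intro p t hpt hp0 hle
      have hpk : k ≤ (p : ℕ) := by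
        by_contra h
        exact hp0 (hclr p (by omega))
      have htk : k ≤ (t : ℕ) := by
        by_contra h
        have h0 := hclr t (by omega)
        rw [h0] at hle
        simp only [Int.natAbs_zero, Nat.le_zero] at hle
        exact hp0 (Int.natAbs_eq_zero.mp hle)
      set pv := A.1 p κ with hpv
      set tv := A.1 t κ with htv
      set q := tv / pv with hq
      set B := T t p hpt.symm (-q) * A with hBdef
      have hmat : B.1 = transvection t p (-q) * A.1 := rfl
      have hBt : ∀ c : Fin n, B.1 t c = A.1 t c + (-q) * A.1 p c := by
        intro c; rw [hmat, transvection_mul_apply_same]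
      have hBo : ∀ (i c : Fin n), i ≠ t → B.1 i c = A.1 i c := by
        intro i c hit; rw [hmat, transvection_mul_apply_of_ne _ _ _ _ hit]
      have hBH : B ∈ H := by
        apply ihN
        · intro j i hj
          by_cases hit : i = t
          · rw [hit, hBt]
            have hpj : A.1 p j = 0 := by
              rw [hcols j p hj]
              have hpj' : ¬ p = j := fun h => by rw [h] at hpk; omega
              simp [hpj']
            rw [hpj, mul_zero, add_zero, ← hit, hcols j i hj, hit]
          · rw [hBo i j hit, hcols j i hj]
        · intro i hi
          have hit : i ≠ t := fun h => by rw [h] at hi; omega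
          rw [hBo i κ hit]
          exact hclr i hi
        · -- the sum strictly decreased
          have hMt : B.1 t κ = tv % pv := by
            rw [hBt, Int.emod_def, hq]
            ring
          have e1 : ∑ i, (B.1 i κ).natAbs
              = (B.1 t κ).natAbs + ∑ i ∈ Finset.univ.erase t, (B.1 i κ).natAbs :=
            (Finset.add_sum_erase _ _ (Finset.mem_univ t)).symm
          have e2 : ∑ i, (A.1 i κ).natAbs
              = (A.1 t κ).natAbs + ∑ i ∈ Finset.univ.erase t, (A.1 i κ).natAbs :=
            (Finset.add_sum_erase _ _ (Finset.mem_univ t)).symm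
          have e3 : ∑ i ∈ Finset.univ.erase t, (B.1 i κ).natAbs
              = ∑ i ∈ Finset.univ.erase t, (A.1 i κ).natAbs := by
            apply Finset.sum_congr rfl
            intro i hi
            rw [hBo i κ (Finset.ne_of_mem_erase hi)]
          have hlt : (tv % pv).natAbs < pv.natAbs := by
            have hnn : 0 ≤ tv % pv := Int.emod_nonneg _ hp0
            have hup : tv % pv < |pv| := Int.emod_lt_abs _ hp0
            rw [Int.abs_eq_natAbs] at hup
            omega
          rw [e1, e3, hMt]
          rw [e2] at hsum
          omega
      have hfin := H.mul_mem (H.inv_mem (hH t p hpt.symm (-q))) hBH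
      rwa [hBdef, inv_mul_cancel_left] at hfin
    by_cases hex : ∃ p t : Fin n, p ≠ t ∧ A.1 p κ ≠ 0 ∧ A.1 t κ ≠ 0
    · obtain ⟨p, t, hpt, hp0, ht0⟩ := hex
      rcases le_total ((A.1 p κ).natAbs) ((A.1 t κ).natAbs) with h | h
      · exact hred p t hpt hp0 h
      · exact hred t p hpt.symm ht0 h
    · push_neg at hex
      -- column κ has exactly one nonzero entry `i₀`, and it is a unit
      obtain ⟨i₀, hi₀⟩ : ∃ i : Fin n, A.1 i κ ≠ 0 := by
        by_contra h
        push_neg at h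
        have := col_combo A κ
        simp [h] at this
      have hsingle : ∀ i : Fin n, i ≠ i₀ → A.1 i κ = 0 := fun i hi => hex i₀ i (Ne.symm hi) hi₀
      have hcombo := col_combo A κ
      have hone : A.1.adjugate κ i₀ * A.1 i₀ κ = 1 := by
        rw [Finset.sum_eq_single i₀ (fun b _ hb => by rw [hsingle b hb, mul_zero])
          (fun h => absurd (Finset.mem_univ i₀) h)] at hcombo
        exact hcombo
      have hunit : A.1 i₀ κ = 1 ∨ A.1 i₀ κ = -1 :=
        Int.isUnit_iff.mp (IsUnit.of_mul_eq_one _ (by rw [mul_comm]; exact hone))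
      have hi₀k : k ≤ (i₀ : ℕ) := by
        by_contra h
        exact hi₀ (hclr i₀ (by omega))
      by_cases hi0κ : i₀ = κ
      · rw [hi0κ] at hunit hsingle hi₀
        rcases hunit with h1 | h1
        · -- column κ is already the standard basis vector: use `ih`
          apply ih A
          intro j i hj
          rcases lt_or_ge (j : ℕ) k with hjk | hjk
          · exact hcols j i hjk
          · have hjκ : j = κ := Fin.ext (by omega)
            rw [hjκ]
            by_cases hiκ : i = κ
            · rw [hiκ, h1, if_pos rfl]
            · rw [hsingle i hiκ, if_neg hiκ]
        · -- single entry `-1` on the diagonal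
          rcases lt_or_ge (k + 1) n with hk1 | hk1
          · -- flip the sign using the row `r` with index `k+1`
            set r : Fin n := ⟨k + 1, hk1⟩ with hr
            have hrval : (r : ℕ) = k + 1 := rfl
            have hrκ : r ≠ κ := Fin.ne_of_val_ne (by omega)
            set B := T r κ hrκ 1 * A with hBdef
            set C := T κ r hrκ.symm (-2) * B with hCdef
            set D := T r κ hrκ 1 * C with hDdef
            have hBmat : B.1 = transvection r κ 1 * A.1 := rfl
            have hCmat : C.1 = transvection κ r (-2) * B.1 := rfl
            have hDmat : D.1 = transvection r κ 1 * C.1 := rfl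
            have hBe : ∀ c : Fin n, B.1 r c = A.1 r c + A.1 κ c := by
              intro c; rw [hBmat, transvection_mul_apply_same]; ring
            have hBo : ∀ (i c : Fin n), i ≠ r → B.1 i c = A.1 i c := by
              intro i c hir; rw [hBmat, transvection_mul_apply_of_ne _ _ _ _ hir]
            have hCe : ∀ c : Fin n, C.1 κ c = B.1 κ c + (-2) * B.1 r c := by
              intro c; rw [hCmat, transvection_mul_apply_same]
            have hCo : ∀ (i c : Fin n), i ≠ κ → C.1 i c = B.1 i c := by
              intro i c hiκ; rw [hCmat, transvection_mul_apply_of_ne _ _ _ _ hiκ]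
            have hDe : ∀ c : Fin n, D.1 r c = C.1 r c + C.1 κ c := by
              intro c; rw [hDmat, transvection_mul_apply_same]; ring
            have hDo : ∀ (i c : Fin n), i ≠ r → D.1 i c = C.1 i c := by
              intro i c hir; rw [hDmat, transvection_mul_apply_of_ne _ _ _ _ hir]
            have hDH : D ∈ H := by
              apply ih
              intro j i hj
              rcases lt_or_ge (j : ℕ) k with hjk | hjk
              · -- columns < k : rows r and κ both have zeros there
                have hAr : A.1 r j = 0 := by
                  rw [hcols j r hjk]
                  have h' : ¬ r = j := fun h => by rw [h] at hrval; omega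
                  simp [h']
                have hAκ : A.1 κ j = 0 := by
                  rw [hcols j κ hjk]
                  have h' : ¬ κ = j := fun h => by rw [h] at hκval; omega
                  simp [h']
                have hBr : B.1 r j = 0 := by rw [hBe, hAr, hAκ, add_zero]
                have hBκ : B.1 κ j = 0 := by rw [hBo κ j hrκ.symm, hAκ]
                have hCκ : C.1 κ j = 0 := by rw [hCe, hBκ, hBr]; ring
                have hCr : C.1 r j = 0 := by rw [hCo r j hrκ, hBr]
                by_cases hir : i = r
                · rw [hir, hDe, hCr, hCκ, add_zero]
                  have h' : ¬ r = j := fun h => by rw [h] at hrval; omega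
                  simp [h']
                by_cases hiκ : i = κ
                · rw [hDo _ _ hir, hiκ, hCκ]
                  have h' : ¬ κ = j := fun h => by rw [h] at hκval; omega
                  simp [h']
                · rw [hDo _ _ hir, hCo _ _ hiκ, hBo _ _ hir]
                  exact hcols j i hjk
              · -- the column κ itself
                have hjκ : j = κ := Fin.ext (by omega)
                rw [hjκ]
                have hAr : A.1 r κ = 0 := hsingle r hrκ
                have hBr : B.1 r κ = -1 := by rw [hBe, hAr, h1, zero_add]
                have hBκ : B.1 κ κ = -1 := by rw [hBo κ κ hrκ.symm, h1]
                have hCκ : C.1 κ κ = 1 := by rw [hCe, hBκ, hBr]; ring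
                have hCr : C.1 r κ = -1 := by rw [hCo r κ hrκ, hBr]
                by_cases hir : i = r
                · rw [hir, hDe, hCr, hCκ, if_neg hrκ]
                  ring
                by_cases hiκ : i = κ
                · rw [hDo _ _ hir, hiκ, hCκ, if_pos rfl]
                · rw [hDo _ _ hir, hCo _ _ hiκ, hBo _ _ hir, hsingle i hiκ, if_neg hiκ]
            -- peel the three transvections
            have s1 := H.mul_mem (H.inv_mem (hH r κ hrκ 1)) hDH
            rw [hDdef, inv_mul_cancel_left] at s1
            have s2 := H.mul_mem (H.inv_mem (hH κ r hrκ.symm (-2))) s1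
            rw [hCdef, inv_mul_cancel_left] at s2
            have s3 := H.mul_mem (H.inv_mem (hH r κ hrκ 1)) s2
            rwa [hBdef, inv_mul_cancel_left] at s3
          · -- k = n - 1 : the matrix is diagonal with determinant -1, contradiction
            exfalso
            have hdiag : A.1 = Matrix.diagonal (fun j => if j = κ then (-1 : ℤ) else 1) := by
              ext i j
              rcases lt_or_ge (j : ℕ) k with hjk | hjk
              · rw [hcols j i hjk, Matrix.diagonal_apply]
                by_cases hij : i = j
                · have h' : ¬ j = κ := fun h => by rw [h] at hjk; omega
                  simp [hij, h']
                · simp [hij]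
              · have hjκ : j = κ := Fin.ext (by omega)
                rw [hjκ, Matrix.diagonal_apply]
                by_cases hij : i = κ
                · rw [hij, h1]
                  simp
                · rw [hsingle i hij]
                  simp [hij]
            have hdet := A.2
            rw [hdiag, Matrix.det_diagonal] at hdet
            rw [Finset.prod_ite_eq' Finset.univ κ (fun _ => (-1 : ℤ))] at hdet
            simp at hdet
      · -- i₀ ≠ κ : move the unit to position κ and clear row i₀
        set ε := A.1 i₀ κ with hε
        have hε2 : ε * ε = 1 := by
          rcases hunit with h | h <;> rw [h] <;> ring
        have hκi₀ : κ ≠ i₀ := Ne.symm hi0κ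
        set B := T κ i₀ hκi₀ ε * A with hBdef
        set C := T i₀ κ hi0κ (-ε) * B with hCdef
        have hBmat : B.1 = transvection κ i₀ ε * A.1 := rfl
        have hCmat : C.1 = transvection i₀ κ (-ε) * B.1 := rfl
        have hBe : ∀ c : Fin n, B.1 κ c = A.1 κ c + ε * A.1 i₀ c := by
          intro c; rw [hBmat, transvection_mul_apply_same]
        have hBo : ∀ (i c : Fin n), i ≠ κ → B.1 i c = A.1 i c := by
          intro i c hiκ; rw [hBmat, transvection_mul_apply_of_ne _ _ _ _ hiκ]
        have hCe : ∀ c : Fin n, C.1 i₀ c = B.1 i₀ c + (-ε) * B.1 κ c := by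
          intro c; rw [hCmat, transvection_mul_apply_same]
        have hCo : ∀ (i c : Fin n), i ≠ i₀ → C.1 i c = B.1 i c := by
          intro i c hii₀; rw [hCmat, transvection_mul_apply_of_ne _ _ _ _ hii₀]
        have hi₀val : ¬ ((i₀ : ℕ) = k) := fun h => hi0κ (Fin.ext (by omega))
        have hCH : C ∈ H := by
          apply ih
          intro j i hj
          rcases lt_or_ge (j : ℕ) k with hjk | hjk
          · have hAi₀ : A.1 i₀ j = 0 := by
              rw [hcols j i₀ hjk]
              have h' : ¬ i₀ = j := fun h => by rw [h] at hi₀k; omega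
              simp [h']
            have hAκ : A.1 κ j = 0 := by
              rw [hcols j κ hjk]
              have h' : ¬ κ = j := fun h => by rw [h] at hκval; omega
              simp [h']
            have hBκ : B.1 κ j = 0 := by rw [hBe, hAκ, hAi₀]; ring
            by_cases hii₀ : i = i₀
            · rw [hii₀, hCe, hBo _ _ hi0κ, hAi₀, hBκ]
              have h' : ¬ i₀ = j := fun h => by rw [h] at hi₀k; omega
              simp [h']
            by_cases hiκ : i = κ
            · rw [hCo _ _ hii₀, hiκ, hBκ]
              have h' : ¬ κ = j := fun h => by rw [h] at hκval; omega
              simp [h']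
            · rw [hCo _ _ hii₀, hBo _ _ hiκ]
              exact hcols j i hjk
          · have hjκ : j = κ := Fin.ext (by omega)
            rw [hjκ]
            have hAκ : A.1 κ κ = 0 := hsingle κ hκi₀
            have hBκ : B.1 κ κ = 1 := by rw [hBe, hAκ, ← hε, zero_add, hε2]
            by_cases hii₀ : i = i₀
            · rw [hii₀, hCe, hBo _ _ hi0κ, ← hε, hBκ, if_neg hi0κ]
              ring
            by_cases hiκ : i = κ
            · rw [hCo _ _ hii₀, hiκ, hBκ, if_pos rfl]
            · rw [hCo _ _ hii₀, hBo _ _ hiκ, hsingle i hii₀, if_neg hiκ]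
        have s1 := H.mul_mem (H.inv_mem (hH i₀ κ hi0κ (-ε))) hCH
        rw [hCdef, inv_mul_cancel_left] at s1
        have s2 := H.mul_mem (H.inv_mem (hH κ i₀ hκi₀ ε)) s1
        rwa [hBdef, inv_mul_cancel_left] at s2

/-- Clearing the entries above the diagonal in column `k`, using column operations. -/
lemma clear {n : ℕ} (H : Subgroup (SL n))
    (hH : ∀ (i j : Fin n) (hij : i ≠ j) (c : ℤ), T i j hij c ∈ H)
    (k : ℕ) (hk : k < n)
    (ih : ∀ B : SL n, (∀ (j i : Fin n), (j : ℕ) < k + 1 →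
        B.1 i j = if i = j then 1 else 0) → B ∈ H) :
    ∀ m (A : SL n),
      (∀ (j i : Fin n), (j : ℕ) < k → A.1 i j = if i = j then 1 else 0) →
      (∀ i : Fin n, m ≤ (i : ℕ) → (i : ℕ) < k → A.1 i ⟨k, hk⟩ = 0) → A ∈ H := by
  set κ : Fin n := ⟨k, hk⟩ with hκ
  have hκval : (κ : ℕ) = k := rfl
  intro m
  induction m with
  | zero =>
    intro A hcols hclr
    exact euclid H hH k hk ih _ A hcols (fun i hi => hclr i (Nat.zero_le _) hi) le_rfl
  | succ m ihm =>
    intro A hcols hclr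
    by_cases hmk : m < k
    · have hmn : m < n := lt_trans hmk hk
      set μ : Fin n := ⟨m, hmn⟩ with hμ
      have hμval : (μ : ℕ) = m := rfl
      have hne : μ ≠ κ := Fin.ne_of_val_ne (by omega)
      set c := -(A.1 μ κ) with hc
      set B := A * T μ κ hne c with hBdef
      have hBmat : B.1 = A.1 * transvection μ κ c := rfl
      have hBo : ∀ (a b : Fin n), b ≠ κ → B.1 a b = A.1 a b := by
        intro a b hbκ; rw [hBmat, mul_transvection_apply_of_ne _ _ _ _ hbκ]
      have hBe : ∀ a : Fin n, B.1 a κ = A.1 a κ + c * A.1 a μ := by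
        intro a; rw [hBmat, mul_transvection_apply_same]
      have hBH : B ∈ H := by
        apply ihm
        · intro j i hj
          have hjκ : j ≠ κ := Fin.ne_of_val_ne (by omega)
          rw [hBo i j hjκ]
          exact hcols j i hj
        · intro i him hik
          rw [hBe]
          have hAiμ : A.1 i μ = if i = μ then 1 else 0 := hcols μ i hmk
          by_cases hiμ : i = μ
          · rw [hAiμ, if_pos hiμ, hc, hiμ]
            ring
          · rw [hAiμ, if_neg hiμ, mul_zero, add_zero]
            have hi' : m + 1 ≤ (i : ℕ) := by
              rcases Nat.lt_or_ge (i : ℕ) (m + 1) with h | h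
              · exfalso; exact hiμ (Fin.ext (by omega))
              · exact h
            exact hclr i hi' hik
      have hfin := H.mul_mem hBH (H.inv_mem (hH μ κ hne c))
      rwa [hBdef, mul_inv_cancel_right] at hfin
    · exact ihm A hcols fun i him hik => hclr i (by omega) hik

lemma mem_all {n : ℕ} (H : Subgroup (SL n))
    (hH : ∀ (i j : Fin n) (hij : i ≠ j) (c : ℤ), T i j hij c ∈ H) :
    ∀ d k, k + d = n → ∀ A : SL n,
      (∀ (j i : Fin n), (j : ℕ) < k → A.1 i j = if i = j then 1 else 0) → A ∈ H := by
  intro d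
  induction d with
  | zero =>
    intro k hkn A hA
    have : A = 1 := by
      apply Subtype.ext
      ext i j
      rw [hA j i (by omega)]
      simp [Matrix.one_apply]
    rw [this]
    exact H.one_mem
  | succ d ihd =>
    intro k hkn A hA
    have hk : k < n := by omega
    exact clear H hH k hk (fun B hB => ihd (k + 1) (by omega) B hB) k A hA
      (fun i h1 h2 => absurd h1 (by omega))

end SLnPerfectAux

/-- For `n ≥ 3`, the group `SLₙ(ℤ)` is perfect: its commutator subgroup is everything,
equivalently its abelianization is trivial. -/
theorem stmt_11 (n : ℕ) (hn : 3 ≤ n) :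
    commutator (Matrix.SpecialLinearGroup (Fin n) ℤ) = ⊤ := by
  rw [eq_top_iff]
  intro A _
  exact SLnPerfectAux.mem_all (commutator _)
    (fun i j hij c => SLnPerfectAux.T_mem_comm hn i j hij c) n 0 (by omega) A
    (fun j i hj => absurd hj (by omega))
end
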